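/- arXiv:1206.2815 — 4 statements merged into one kernel-verified Lean document; each statement's English description precedes it below -/
import Mathlib

section
/- Let N be a positive integer and let φ : [log N, ∞) → ℂ be measurable with ‖φ‖₂² = ∫_{log N}^∞ |φ(ξ)|² dξ < ∞. Then there exist coefficients a : ℕ → ℂ with a_n = 0 for n < N and ∑_{n≥N} |a_n|² ≤ ‖φ‖₂², such that the function Φ(s) = ∫_{log N}^∞ φ(ξ) e^{−(s−1/2)ξ} dξ − ∑_{n=N}^∞ a_n n^{−s} satisfies |Φ(s)| ≤ 2 |s − 1/2| N^{−Re s − 1/2} ‖φ‖₂ for every s with Re s > 1/2. -/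
open MeasureTheory Set


/-- Cauchy–Schwarz for tsum of nonneg reals. -/
lemma my_tsum_cs (f g : ℕ → ℝ) (hf0 : ∀ n, 0 ≤ f n) (hg0 : ∀ n, 0 ≤ g n)
    (hf : Summable fun n => f n ^ 2) (hg : Summable fun n => g n ^ 2) :
    (∑' n, f n * g n) ≤ Real.sqrt (∑' n, f n ^ 2) * Real.sqrt (∑' n, g n ^ 2) := by
  rw [← Real.sqrt_mul (tsum_nonneg fun n => sq_nonneg _)]
  apply Real.tsum_le_of_sum_range_le (fun n => mul_nonneg (hf0 n) (hg0 n))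
  intro n
  rw [Real.le_sqrt (Finset.sum_nonneg fun i _ => mul_nonneg (hf0 i) (hg0 i))
    (mul_nonneg (tsum_nonneg fun n => sq_nonneg _) (tsum_nonneg fun n => sq_nonneg _))]
  refine (Finset.sum_mul_sq_le_sq_mul_sq _ f g).trans ?_
  exact mul_le_mul (Summable.sum_le_tsum _ (fun i _ => sq_nonneg _) hf)
    (Summable.sum_le_tsum _ (fun i _ => sq_nonneg _) hg)
    (Finset.sum_nonneg fun i _ => sq_nonneg _) (tsum_nonneg fun n => sq_nonneg _)

lemma my_union (N : ℕ) (hN : 1 ≤ N) :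
    (⋃ k : ℕ, Set.Ico (Real.log (N + k : ℕ)) (Real.log ((N + k : ℕ) + 1))) =
      Set.Ici (Real.log N) := by
  ext x
  simp only [Set.mem_iUnion, Set.mem_Ico, Set.mem_Ici]
  constructor
  · rintro ⟨k, h1, -⟩
    refine le_trans (Real.log_le_log (by positivity) ?_) h1
    exact_mod_cast Nat.le_add_right N k
  · intro hx
    have hex : (N : ℝ) ≤ Real.exp x := by
      calc (N : ℝ) = Real.exp (Real.log N) := (Real.exp_log (by positivity)).symm
        _ ≤ Real.exp x := Real.exp_le_exp.2 hx
    set n := ⌊Real.exp x⌋₊ with hn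
    have hNn : N ≤ n := Nat.le_floor hex
    have hn1 : 1 ≤ n := le_trans hN hNn
    refine ⟨n - N, ?_, ?_⟩
    · rw [Nat.add_sub_cancel' hNn]
      calc Real.log n ≤ Real.log (Real.exp x) :=
            Real.log_le_log (by exact_mod_cast hn1) (Nat.floor_le (Real.exp_pos x).le)
        _ = x := Real.log_exp x
    · rw [Nat.add_sub_cancel' hNn]
      calc x = Real.log (Real.exp x) := (Real.log_exp x).symm
        _ < Real.log ((n : ℝ) + 1) :=
            Real.log_lt_log (Real.exp_pos x) (Nat.lt_floor_add_one _)

lemma my_disj (N : ℕ) (hN : 1 ≤ N) :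
    Pairwise (Function.onFun Disjoint fun k : ℕ =>
      Set.Ico (Real.log (N + k : ℕ)) (Real.log ((N + k : ℕ) + 1))) := by
  have hmono : ∀ i j : ℕ, i < j → Real.log ((N + i : ℕ) + 1) ≤ Real.log (N + j : ℕ) := by
    intro i j hij
    apply Real.log_le_log (by positivity)
    push_cast
    have : (i : ℝ) + 1 ≤ j := by exact_mod_cast hij
    linarith
  intro i j hij
  rcases lt_or_gt_of_ne hij with h | h
  · exact Set.Ico_disjoint_Ico.2 (by
      simpa using le_trans (min_le_left _ _) (le_trans (hmono i j h) (le_max_right _ _)))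
  · exact (Set.Ico_disjoint_Ico.2 (by
      simpa using le_trans (min_le_left _ _) (le_trans (hmono j i h) (le_max_right _ _)))).symm

lemma my_tail (N : ℕ) (hN : 1 ≤ N) :
    (∑' k : ℕ, (((N + k : ℕ) : ℝ) ^ 2)⁻¹) ≤ 2 / N := by
  have hpos : ∀ k : ℕ, (0:ℝ) ≤ (((N + k : ℕ) : ℝ) ^ 2)⁻¹ := fun k => by positivity
  apply Real.tsum_le_of_sum_range_le hpos
  intro m
  match m with
  | 0 => positivity
  | (m+1) =>
    rw [Finset.sum_range_succ']
    have h1 : ∀ i : ℕ, (((N + (i+1) : ℕ) : ℝ) ^ 2)⁻¹ ≤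
        ((N + i : ℕ) : ℝ)⁻¹ - ((N + (i+1) : ℕ) : ℝ)⁻¹ := by
      intro i
      have hA : (0:ℝ) < (N + i : ℕ) := by positivity
      have hB : (0:ℝ) < (N + (i+1) : ℕ) := by positivity
      rw [inv_sub_inv hA.ne' hB.ne', div_eq_mul_inv]
      have e1 : ((N + (i+1) : ℕ) : ℝ) - ((N + i : ℕ) : ℝ) = 1 := by push_cast; ring
      rw [e1, one_mul, inv_le_inv₀ (by positivity) (by positivity)]
      have : ((N + i : ℕ) : ℝ) ≤ ((N + (i+1) : ℕ) : ℝ) := by push_cast; linarith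
      nlinarith
    calc ∑ i ∈ Finset.range m, (((N + (i+1) : ℕ) : ℝ) ^ 2)⁻¹ + (((N + 0 : ℕ) : ℝ) ^ 2)⁻¹
        ≤ ∑ i ∈ Finset.range m, (((N + i : ℕ) : ℝ)⁻¹ - ((N + (i+1) : ℕ) : ℝ)⁻¹)
          + (((N : ℕ) : ℝ) ^ 2)⁻¹ := by
          simp only [Nat.add_zero]
          gcongr
          exact h1 _
      _ = (((N : ℕ) : ℝ)⁻¹ - ((N + m : ℕ) : ℝ)⁻¹) + (((N : ℕ) : ℝ) ^ 2)⁻¹ := by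
          rw [Finset.sum_range_sub' (fun i => ((N + i : ℕ) : ℝ)⁻¹)]
          simp
      _ ≤ 2 / N := by
          have h2 : (((N : ℕ) : ℝ) ^ 2)⁻¹ ≤ ((N : ℕ) : ℝ)⁻¹ := by
            apply inv_anti₀ (by positivity)
            have : (1:ℝ) ≤ (N:ℝ) := by exact_mod_cast hN
            nlinarith
          have h3 : (0:ℝ) ≤ ((N + m : ℕ) : ℝ)⁻¹ := by positivity
          have h4 : ((N:ℕ):ℝ)⁻¹ = 1 / (N:ℝ) := by rw [one_div]
          have h5 : (0:ℝ) < (N:ℝ) := by positivity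
          push_cast at *
          rw [div_eq_mul_inv]
          nlinarith

lemma my_exp_sub_one (w : ℂ) (hw : w.re ≤ 0) : ‖Complex.exp w - 1‖ ≤ ‖w‖ := by
  have hconv : Convex ℝ {z : ℂ | z.re ≤ 0} := convex_halfSpace_re_le 0
  have h := hconv.norm_image_sub_le_of_norm_hasFDerivWithin_le
    (f := Complex.exp) (f' := fun z => (1 : ℂ →L[ℂ] ℂ).smulRight (Complex.exp z)) (C := 1)
    (fun z _ => ((Complex.hasDerivAt_exp z).hasFDerivAt).hasFDerivWithinAt)
    (fun z hz => by
      rw [ContinuousLinearMap.norm_smulRight_apply, Complex.norm_exp]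
      calc ‖(1 : ℂ →L[ℂ] ℂ)‖ * Real.exp z.re ≤ 1 * 1 :=
            mul_le_mul (ContinuousLinearMap.norm_id_le) (Real.exp_le_one_iff.2 hz)
              (Real.exp_pos _).le zero_le_one
        _ = 1 := one_mul 1)
    (x := 0) (y := w) (by simp) hw
  simpa using h

lemma my_int_cs (f : ℝ → ℂ) (hmeas : Measurable f) (a b : ℝ) (hab : a ≤ b)
    (hf2 : IntegrableOn (fun ξ => ‖f ξ‖ ^ 2) (Set.Ico a b)) :
    (∫ ξ in Set.Ico a b, ‖f ξ‖) ≤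
      Real.sqrt (b - a) * Real.sqrt (∫ ξ in Set.Ico a b, ‖f ξ‖ ^ 2) := by
  have hsm : AEStronglyMeasurable (fun ξ => ‖f ξ‖) (volume.restrict (Set.Ico a b)) :=
    (hmeas.norm).aestronglyMeasurable
  have hmem : MemLp (fun ξ => ‖f ξ‖) (ENNReal.ofReal 2) (volume.restrict (Set.Ico a b)) := by
    rw [show ENNReal.ofReal 2 = 2 by norm_num]
    exact (memLp_two_iff_integrable_sq hsm).2 hf2
  have hfin : Fact ((volume.restrict (Set.Ico a b)) Set.univ < ⊤) := ⟨by
    rw [Measure.restrict_apply_univ, Real.volume_Ico]; exact ENNReal.ofReal_lt_top⟩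
  have : IsFiniteMeasure (volume.restrict (Set.Ico a b)) := ⟨hfin.1⟩
  have hmem1 : MemLp (fun _ : ℝ => (1:ℝ)) (ENNReal.ofReal 2) (volume.restrict (Set.Ico a b)) :=
    memLp_const 1
  have hpq : Real.HolderConjugate 2 2 := Real.HolderConjugate.two_two
  have h := integral_mul_le_Lp_mul_Lq_of_nonneg hpq
    (f := fun ξ => ‖f ξ‖) (g := fun _ => (1:ℝ))
    (Filter.Eventually.of_forall fun ξ => norm_nonneg _)
    (Filter.Eventually.of_forall fun ξ => zero_le_one) hmem hmem1
  simp only [mul_one, Real.rpow_two, one_pow] at h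
  have hconst : (∫ _ξ in Set.Ico a b, (1:ℝ)) = b - a := by
    simp [Real.volume_Ico, ENNReal.toReal_ofReal (sub_nonneg.2 hab), hab]
  rw [hconst] at h
  refine h.trans (le_of_eq ?_)
  rw [mul_comm, Real.sqrt_eq_rpow, Real.sqrt_eq_rpow]



lemma my_sqrt_cpow (n : ℕ) (hn : 1 ≤ n) (s : ℂ) :
    ((Real.sqrt n : ℝ) : ℂ) * (n : ℂ) ^ (-s) =
      Complex.exp (-(s - 1/2) * (Real.log n : ℂ)) := by
  have hp : (0:ℝ) < n := by exact_mod_cast hn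
  have hne : (n : ℂ) ≠ 0 := by exact_mod_cast hp.ne'
  have hlog : Complex.log (n : ℂ) = (Real.log n : ℂ) := by
    rw [show ((n : ℕ) : ℂ) = ((n : ℝ) : ℂ) by push_cast; ring, ← Complex.ofReal_log hp.le]
  have hsqrt : ((Real.sqrt n : ℝ) : ℂ) = Complex.exp ((Real.log n / 2 : ℝ) : ℂ) := by
    rw [← Complex.ofReal_exp]
    norm_cast
    rw [Real.sqrt_eq_rpow, Real.rpow_def_of_pos hp]
    ring_nf
  rw [Complex.cpow_def_of_ne_zero hne, hlog, hsqrt, ← Complex.exp_add]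
  congr 1
  push_cast
  ring

lemma my_exp_diff (r : ℂ) (hr : 0 ≤ r.re) (L ξ : ℝ) (hL : L ≤ ξ) :
    ‖Complex.exp (-r * ξ) - Complex.exp (-r * L)‖ ≤
      ‖r‖ * (ξ - L) * Real.exp (-r.re * L) := by
  have key : Complex.exp (-r * ξ) - Complex.exp (-r * L) =
      Complex.exp (-r * L) * (Complex.exp (-r * ((ξ : ℂ) - L)) - 1) := by
    rw [mul_sub, ← Complex.exp_add, mul_one]
    ring_nf
  rw [key, norm_mul]
  have h1 : ‖Complex.exp (-r * L)‖ = Real.exp (-r.re * L) := by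
    rw [Complex.norm_exp]
    congr 1
    simp [Complex.mul_re]
  have h2 : ‖Complex.exp (-r * ((ξ : ℂ) - L)) - 1‖ ≤ ‖r‖ * (ξ - L) := by
    refine le_trans (my_exp_sub_one _ ?_) ?_
    · have : ((ξ : ℂ) - L) = ((ξ - L : ℝ) : ℂ) := by push_cast; ring
      rw [this]
      simp only [neg_mul, Complex.neg_re, Complex.mul_re, Complex.ofReal_re,
        Complex.ofReal_im, mul_zero, sub_zero, neg_nonpos]
      exact mul_nonneg hr (by linarith)
    · rw [norm_mul, norm_neg]
      have : ‖((ξ : ℂ) - L)‖ = ξ - L := by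
        rw [show ((ξ : ℂ) - L) = ((ξ - L : ℝ) : ℂ) by push_cast; ring]
        rw [Complex.norm_real, Real.norm_eq_abs, abs_of_nonneg (by linarith)]
      rw [this]
  rw [h1]
  calc Real.exp (-r.re * L) * ‖Complex.exp (-r * ((ξ:ℂ) - L)) - 1‖
      ≤ Real.exp (-r.re * L) * (‖r‖ * (ξ - L)) := by
        gcongr
    _ = ‖r‖ * (ξ - L) * Real.exp (-r.re * L) := by ring


lemma my_rpow_calc (n : ℕ) (hp : 0 < (n:ℝ)) (x : ℝ) :
    Real.exp (-(x - 1/2) * Real.log n) * (1/(n:ℝ)) * Real.sqrt (1/(n:ℝ)) =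
      (n:ℝ) ^ (-x - 1) := by
  have h1 : (1:ℝ)/(n:ℝ) = Real.exp (-Real.log n) := by
    rw [Real.exp_neg, Real.exp_log hp, one_div]
  have h2 : Real.sqrt (1/(n:ℝ)) = Real.exp (-Real.log n * (1/2)) := by
    rw [h1, Real.sqrt_eq_rpow, Real.rpow_def_of_pos (Real.exp_pos _), Real.log_exp]
  have h3 : (n:ℝ) ^ (-x - 1) = Real.exp (Real.log n * (-x-1)) := Real.rpow_def_of_pos hp _
  rw [h2, h1, h3, ← Real.exp_add, ← Real.exp_add]
  congr 1
  ring

lemma my_csq (m : ℕ) (hm : 0 < (m:ℝ)) (x : ℝ) :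
    ((m:ℝ) ^ (-x - 1)) ^ 2 = (m:ℝ) ^ (-(2*x)) * (((m:ℝ)) ^ 2)⁻¹ := by
  have h1 : ((m:ℝ) ^ (-x - 1)) ^ (2:ℕ) = (m:ℝ) ^ (((-x-1) * 2) : ℝ) := by
    rw [Real.rpow_mul hm.le, Real.rpow_two]
  have h2 : (((m:ℝ)) ^ (2:ℕ))⁻¹ = (m:ℝ) ^ ((-2 : ℝ)) := by
    rw [show (-2:ℝ) = -(2:ℝ) from rfl, Real.rpow_neg hm.le, Real.rpow_two]
  rw [h1, h2, ← Real.rpow_add hm]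
  congr 1
  ring

set_option maxHeartbeats 2000000 in
/-- **Lemma 1.** Discretization of the Laplace transform: approximation of a function in
`H²(ℂ⁺_{1/2})` by a Dirichlet series with coefficients supported on `[N, ∞)`. -/
theorem laplace_discretization (N : ℕ) (hN : 1 ≤ N) (φ : ℝ → ℂ)
    (hmeas : Measurable φ)
    (hL2 : IntegrableOn (fun ξ => ‖φ ξ‖ ^ 2) (Set.Ici (Real.log N))) :
    ∃ a : ℕ → ℂ, (∀ n, n < N → a n = 0) ∧
      Summable (fun n => ‖a n‖ ^ 2) ∧
      (∑' n : ℕ, ‖a n‖ ^ 2) ≤ (∫ ξ in Set.Ici (Real.log N), ‖φ ξ‖ ^ 2) ∧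
      ∀ s : ℂ, 1 / 2 < s.re →
        ‖(∫ ξ in Set.Ici (Real.log N), φ ξ * Complex.exp (-(s - 1 / 2) * (ξ : ℂ))) -
            ∑' n : ℕ, a n * (n : ℂ) ^ (-s)‖ ≤
          2 * ‖s - 1 / 2‖ * (N : ℝ) ^ (-s.re - 1 / 2) *
            Real.sqrt (∫ ξ in Set.Ici (Real.log N), ‖φ ξ‖ ^ 2) := by
  -- the intervals
  set I : ℕ → Set ℝ := fun n => Set.Ico (Real.log n) (Real.log ((n : ℝ) + 1)) with hI
  -- the coefficients
  set a : ℕ → ℂ := fun n =>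
    if n < N then 0 else (Real.sqrt n : ℂ) * ∫ ξ in I n, φ ξ with ha
  have ha0 : ∀ n, n < N → a n = 0 := fun n hn => by simp [ha, hn]
  -- basic positivity facts
  have hnpos : ∀ n : ℕ, N ≤ n → (0:ℝ) < n := fun n hn => by
    have : 0 < n := lt_of_lt_of_le hN hn; exact_mod_cast this
  have hIsub : ∀ n : ℕ, N ≤ n → I n ⊆ Set.Ici (Real.log N) := by
    intro n hn x hx
    exact le_trans (Real.log_le_log (by positivity) (by exact_mod_cast hn)) hx.1
  have hlen0 : ∀ n : ℕ, N ≤ n → Real.log n ≤ Real.log ((n:ℝ)+1) := fun n hn =>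
    Real.log_le_log (hnpos n hn) (by linarith)
  have hlen : ∀ n : ℕ, N ≤ n → Real.log ((n:ℝ)+1) - Real.log n ≤ 1 / n := by
    intro n hn
    have hp := hnpos n hn
    rw [← Real.log_div (by positivity) (by positivity)]
    have h1 : ((n:ℝ)+1)/n = 1 + 1/n := by field_simp
    calc Real.log (((n:ℝ)+1)/n) ≤ ((n:ℝ)+1)/n - 1 :=
          Real.log_le_sub_one_of_pos (by positivity)
      _ = 1/n := by rw [h1]; ring
  -- integrability of ‖φ‖² on each interval
  have hφ2 : ∀ n : ℕ, N ≤ n → IntegrableOn (fun ξ => ‖φ ξ‖ ^ 2) (I n) :=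
    fun n hn => hL2.mono_set (hIsub n hn)
  have hint2nn : ∀ n : ℕ, (0:ℝ) ≤ ∫ ξ in I n, ‖φ ξ‖ ^ 2 :=
    fun n => setIntegral_nonneg measurableSet_Ico (fun x _ => sq_nonneg _)
  have htotnn : (0:ℝ) ≤ ∫ ξ in Set.Ici (Real.log N), ‖φ ξ‖ ^ 2 :=
    setIntegral_nonneg measurableSet_Ici (fun x _ => sq_nonneg _)
  -- interval Cauchy-Schwarz, combined with interval length bound
  have hCS : ∀ n : ℕ, N ≤ n → (∫ ξ in I n, ‖φ ξ‖) ≤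
      Real.sqrt (1 / n) * Real.sqrt (∫ ξ in I n, ‖φ ξ‖ ^ 2) := by
    intro n hn
    refine le_trans (my_int_cs φ hmeas _ _ (hlen0 n hn) (hφ2 n hn)) ?_
    gcongr
    exact hlen n hn
  -- φ is integrable on each bounded interval
  have hφ1 : ∀ n : ℕ, N ≤ n → IntegrableOn φ (I n) := by
    intro n hn
    have hfin : IsFiniteMeasure (volume.restrict (I n)) := ⟨by
      rw [Measure.restrict_apply_univ, hI]
      simp only
      rw [Real.volume_Ico]
      exact ENNReal.ofReal_lt_top⟩
    have hm2 : MemLp φ 2 (volume.restrict (I n)) :=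
      (memLp_two_iff_integrable_sq_norm hmeas.aestronglyMeasurable).2 (hφ2 n hn)
    have hm1 : MemLp φ 1 (volume.restrict (I n)) :=
      hm2.mono_exponent (by norm_num)
    exact memLp_one_iff_integrable.1 hm1
  -- norm bound for coefficients
  have hanorm : ∀ n : ℕ, N ≤ n → ‖a n‖ ≤ Real.sqrt (∫ ξ in I n, ‖φ ξ‖ ^ 2) := by
    intro n hn
    have hp := hnpos n hn
    have h1 : ‖a n‖ = Real.sqrt n * ‖∫ ξ in I n, φ ξ‖ := by
      rw [ha]
      simp only [if_neg (not_lt.2 hn), norm_mul, Complex.norm_real,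
        Real.norm_eq_abs, abs_of_nonneg (Real.sqrt_nonneg _)]
    rw [h1]
    calc Real.sqrt n * ‖∫ ξ in I n, φ ξ‖ ≤ Real.sqrt n * ∫ ξ in I n, ‖φ ξ‖ := by
          gcongr; exact norm_integral_le_integral_norm _
      _ ≤ Real.sqrt n * (Real.sqrt (1 / n) * Real.sqrt (∫ ξ in I n, ‖φ ξ‖ ^ 2)) := by
          gcongr; exact hCS n hn
      _ = (Real.sqrt n * Real.sqrt (1 / n)) * Real.sqrt (∫ ξ in I n, ‖φ ξ‖ ^ 2) := by ring
      _ = Real.sqrt (∫ ξ in I n, ‖φ ξ‖ ^ 2) := by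
          rw [← Real.sqrt_mul (le_of_lt hp)]
          rw [show (n:ℝ) * (1/n) = 1 from by field_simp, Real.sqrt_one, one_mul]
  have hasq : ∀ n : ℕ, N ≤ n → ‖a n‖ ^ 2 ≤ ∫ ξ in I n, ‖φ ξ‖ ^ 2 := by
    intro n hn
    have h := hanorm n hn
    nlinarith [norm_nonneg (a n), Real.sq_sqrt (hint2nn n),
      Real.sqrt_nonneg (∫ ξ in I n, ‖φ ξ‖ ^ 2)]
  -- decomposition of the half line
  have hUnion : (⋃ k : ℕ, I (N + k)) = Set.Ici (Real.log N) := my_union N hN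
  have hDisj : Pairwise (Function.onFun Disjoint fun k : ℕ => I (N + k)) := my_disj N hN
  have hbHasSum : HasSum (fun k : ℕ => ∫ ξ in I (N + k), ‖φ ξ‖ ^ 2)
      (∫ ξ in Set.Ici (Real.log N), ‖φ ξ‖ ^ 2) := by
    rw [← hUnion]
    exact hasSum_integral_iUnion (fun k => measurableSet_Ico) hDisj (hUnion ▸ hL2)
  have hg : Summable (fun k : ℕ => ∫ ξ in I (N + k), ‖φ ξ‖ ^ 2) := hbHasSum.summable
  have haSummable : Summable (fun n => ‖a n‖ ^ 2) := by
    rw [← summable_nat_add_iff N]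
    apply Summable.of_nonneg_of_le (fun k => sq_nonneg _)
      (fun k => by simpa [Nat.add_comm] using hasq (N + k) (Nat.le_add_right _ _))
    simpa [Nat.add_comm] using hg
  have htsum_a : (∑' n, ‖a n‖ ^ 2) ≤ ∫ ξ in Set.Ici (Real.log N), ‖φ ξ‖ ^ 2 := by
    rw [← hbHasSum.tsum_eq, ← Summable.sum_add_tsum_nat_add N haSummable]
    have h0 : (∑ i ∈ Finset.range N, ‖a i‖ ^ 2) = 0 := Finset.sum_eq_zero fun i hi => by
      rw [ha0 i (Finset.mem_range.1 hi)]; simp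
    rw [h0, zero_add]
    refine Summable.tsum_le_tsum
      (fun k => by simpa [Nat.add_comm] using hasq (N + k) (Nat.le_add_right _ _))
      ((summable_nat_add_iff N).2 haSummable) hg
  refine ⟨a, ha0, haSummable, htsum_a, ?_⟩
  intro s hs
  have hσ : (0:ℝ) < s.re - 1/2 := by linarith
  have hNp : (0:ℝ) < (N:ℝ) := by exact_mod_cast hN
  have hre : (s - 1/2 : ℂ).re = s.re - 1/2 := by
    simp [Complex.sub_re]
  have hXnn : (0:ℝ) ≤ ‖s - 1/2‖ := norm_nonneg _
  -- norm of the exponential factor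
  have hnormExp : ∀ ξ : ℝ, ‖Complex.exp (-(s - 1/2) * (ξ:ℂ))‖ =
      Real.exp (-(s.re - 1/2) * ξ) := by
    intro ξ
    rw [Complex.norm_exp]
    congr 1
    rw [show (-(s - 1/2) * (ξ:ℂ)).re = -(s - 1/2 : ℂ).re * ξ by
      simp [Complex.mul_re], hre]
  -- integrability on the half-line
  have hmeasE : Measurable (fun ξ : ℝ => φ ξ * Complex.exp (-(s - 1/2) * (ξ:ℂ))) :=
    hmeas.mul (Complex.measurable_exp.comp (measurable_const.mul Complex.measurable_ofReal))
  have hexpInt : IntegrableOn (fun ξ : ℝ => Real.exp (-(2*(s.re - 1/2)) * ξ))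
      (Set.Ici (Real.log N)) :=
    (integrableOn_Ici_iff_integrableOn_Ioi (by simp)).2 (exp_neg_integrableOn_Ioi _ (by linarith))
  have hEint : IntegrableOn (fun ξ : ℝ => φ ξ * Complex.exp (-(s - 1/2) * (ξ:ℂ)))
      (Set.Ici (Real.log N)) := by
    refine Integrable.mono' ((hL2.add hexpInt).div_const 2) hmeasE.aestronglyMeasurable ?_
    refine Filter.Eventually.of_forall fun ξ => ?_
    rw [norm_mul, hnormExp ξ]
    have he2 : Real.exp (-(s.re-1/2)*ξ) * Real.exp (-(s.re-1/2)*ξ)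
        = Real.exp (-(2*(s.re-1/2))*ξ) := by
      rw [← Real.exp_add]; congr 1; ring
    simp only [Pi.add_apply, Pi.div_apply]
    nlinarith [sq_nonneg (‖φ ξ‖ - Real.exp (-(s.re-1/2)*ξ)), norm_nonneg (φ ξ),
      Real.exp_pos (-(s.re-1/2)*ξ)]
  -- HasSum decomposition of the Laplace integral
  have hPHasSum : HasSum (fun k : ℕ => ∫ ξ in I (N+k), φ ξ * Complex.exp (-(s - 1/2) * (ξ:ℂ)))
      (∫ ξ in Set.Ici (Real.log N), φ ξ * Complex.exp (-(s - 1/2) * (ξ:ℂ))) := by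
    rw [← hUnion]
    exact hasSum_integral_iUnion (fun k => measurableSet_Ico) hDisj (hUnion ▸ hEint)
  -- summability of the Dirichlet series
  have hpow2sum : Summable (fun n : ℕ => ((n:ℝ) ^ (-s.re)) ^ 2) := by
    have heq : (fun n : ℕ => ((n:ℝ) ^ (-s.re)) ^ 2) = fun n : ℕ => (n:ℝ) ^ (-(2*s.re)) := by
      funext n
      rcases Nat.eq_zero_or_pos n with h0 | h0
      · subst h0
        rw [Nat.cast_zero, Real.zero_rpow (by linarith), Real.zero_rpow (by linarith)]
        norm_num
      · have hp : (0:ℝ) < n := by exact_mod_cast h0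
        rw [show ((n:ℝ) ^ (-s.re)) ^ (2:ℕ) = (n:ℝ) ^ ((-s.re)*2:ℝ) from by
          rw [Real.rpow_mul hp.le, Real.rpow_two]]
        congr 1; ring
    rw [heq]
    exact Real.summable_nat_rpow.2 (by linarith)
  have hQterm : ∀ n : ℕ, ‖a n * (n:ℂ) ^ (-s)‖ ≤ (‖a n‖^2 + ((n:ℝ) ^ (-s.re))^2)/2 := by
    intro n
    rcases Nat.eq_zero_or_pos n with h0 | h0
    · subst h0
      rw [ha0 0 (by omega)]
      simp only [zero_mul, norm_zero]
      positivity
    · rw [norm_mul, Complex.norm_natCast_cpow_of_pos h0, Complex.neg_re]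
      nlinarith [sq_nonneg (‖a n‖ - (n:ℝ) ^ (-s.re)), norm_nonneg (a n),
        Real.rpow_nonneg (Nat.cast_nonneg n) (-s.re)]
  have hDsum : Summable (fun n : ℕ => a n * (n:ℂ) ^ (-s)) :=
    Summable.of_norm_bounded ((haSummable.add hpow2sum).div_const 2) hQterm
  have hDzero : (∑ i ∈ Finset.range N, a i * (i:ℂ) ^ (-s)) = 0 :=
    Finset.sum_eq_zero fun i hi => by rw [ha0 i (Finset.mem_range.1 hi), zero_mul]
  have hQhasSum : HasSum (fun k : ℕ => a (N+k) * ((N+k : ℕ):ℂ) ^ (-s))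
      (∑' n : ℕ, a n * (n:ℂ) ^ (-s)) := by
    have h5 := ((summable_nat_add_iff N).2 hDsum).hasSum
    have h6 := Summable.sum_add_tsum_nat_add N hDsum
    rw [hDzero, zero_add] at h6
    rw [h6] at h5
    have h8 : (fun k : ℕ => a (k+N) * ((k+N : ℕ):ℂ) ^ (-s))
        = fun k : ℕ => a (N+k) * ((N+k : ℕ):ℂ) ^ (-s) := by
      funext k; rw [Nat.add_comm]
    rwa [h8] at h5
  -- termwise bound
  have hterm : ∀ k : ℕ,
      ‖(∫ ξ in I (N+k), φ ξ * Complex.exp (-(s - 1/2) * (ξ:ℂ)))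
          - a (N+k) * ((N+k : ℕ):ℂ) ^ (-s)‖ ≤
        (‖s - 1/2‖ * ((N+k : ℕ):ℝ) ^ (-s.re - 1))
          * Real.sqrt (∫ ξ in I (N+k), ‖φ ξ‖^2) := by
    intro k
    set n := N + k with hnk
    have hn : N ≤ n := Nat.le_add_right N k
    have hp : (0:ℝ) < n := hnpos n hn
    have hn1 : 1 ≤ n := le_trans hN hn
    have hQeq : a n * ((n : ℕ):ℂ) ^ (-s)
        = ∫ ξ in I n, φ ξ * Complex.exp (-(s - 1/2) * ((Real.log n : ℝ):ℂ)) := by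
      rw [MeasureTheory.integral_mul_const, ha]
      simp only [if_neg (not_lt.2 hn)]
      rw [mul_comm ((Real.sqrt n : ℂ)) _, mul_assoc, my_sqrt_cpow n hn1 s]
    have hPint : IntegrableOn (fun ξ => φ ξ * Complex.exp (-(s - 1/2) * (ξ:ℂ))) (I n) :=
      hEint.mono_set (hIsub n hn)
    have hQint : IntegrableOn
        (fun ξ => φ ξ * Complex.exp (-(s - 1/2) * ((Real.log n : ℝ):ℂ))) (I n) :=
      (hφ1 n hn).mul_const _
    have hsub : (∫ ξ in I n, φ ξ * Complex.exp (-(s - 1/2) * (ξ:ℂ)))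
          - a n * ((n : ℕ):ℂ) ^ (-s)
        = ∫ ξ in I n, φ ξ * (Complex.exp (-(s - 1/2) * (ξ:ℂ))
            - Complex.exp (-(s - 1/2) * ((Real.log n : ℝ):ℂ))) := by
      rw [hQeq, ← integral_sub hPint hQint]
      congr 1
      funext ξ
      ring
    rw [hsub]
    set K : ℝ := ‖s - 1/2‖ * (1/(n:ℝ))
      * Real.exp (-(s.re - 1/2) * Real.log n) with hK
    have hKnn : 0 ≤ K := by positivity
    have hpoint : ∀ ξ ∈ I n,
        ‖φ ξ * (Complex.exp (-(s - 1/2) * (ξ:ℂ))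
          - Complex.exp (-(s - 1/2) * ((Real.log n : ℝ):ℂ)))‖ ≤ ‖φ ξ‖ * K := by
      intro ξ hξ
      rw [norm_mul]
      apply mul_le_mul_of_nonneg_left ?_ (norm_nonneg _)
      have hd := my_exp_diff (s - 1/2) (by rw [hre]; linarith) (Real.log n) ξ hξ.1
      refine hd.trans ?_
      rw [hK, hre]
      have hle : ξ - Real.log n ≤ 1/(n:ℝ) := by
        have h1 := hξ.2
        have h2 := hlen n hn
        have : ξ < Real.log ((n:ℝ)+1) := h1
        linarith
      have hξL : 0 ≤ ξ - Real.log n := by linarith [hξ.1]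
      gcongr
    have hInt1 : IntegrableOn (fun ξ => ‖φ ξ‖ * K) (I n) := (hφ1 n hn).norm.mul_const K
    have hIntSub : IntegrableOn (fun ξ => φ ξ * (Complex.exp (-(s - 1/2) * (ξ:ℂ))
        - Complex.exp (-(s - 1/2) * ((Real.log n : ℝ):ℂ)))) (I n) := by
      simpa [mul_sub, Pi.sub_def] using hPint.sub hQint
    calc ‖∫ ξ in I n, φ ξ * (Complex.exp (-(s - 1/2) * (ξ:ℂ))
            - Complex.exp (-(s - 1/2) * ((Real.log n : ℝ):ℂ)))‖
        ≤ ∫ ξ in I n, ‖φ ξ * (Complex.exp (-(s - 1/2) * (ξ:ℂ))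
            - Complex.exp (-(s - 1/2) * ((Real.log n : ℝ):ℂ)))‖ :=
          norm_integral_le_integral_norm _
      _ ≤ ∫ ξ in I n, ‖φ ξ‖ * K := by
          refine integral_mono_of_nonneg
            (Filter.Eventually.of_forall fun ξ => norm_nonneg _) hInt1 ?_
          exact (ae_restrict_iff' measurableSet_Ico).2 (Filter.Eventually.of_forall hpoint)
      _ = (∫ ξ in I n, ‖φ ξ‖) * K := MeasureTheory.integral_mul_const K _
      _ ≤ (Real.sqrt (1/(n:ℝ)) * Real.sqrt (∫ ξ in I n, ‖φ ξ‖^2)) * K :=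
          mul_le_mul_of_nonneg_right (hCS n hn) hKnn
      _ = (‖s - 1/2‖ * ((n : ℕ):ℝ) ^ (-s.re - 1))
            * Real.sqrt (∫ ξ in I n, ‖φ ξ‖^2) := by
          rw [hK, ← my_rpow_calc n hp s.re]
          ring
  -- square-summability of both sides
  have hbsq : ∀ k : ℕ, (Real.sqrt (∫ ξ in I (N+k), ‖φ ξ‖^2))^2
      = ∫ ξ in I (N+k), ‖φ ξ‖^2 := fun k => Real.sq_sqrt (hint2nn _)
  have hb2 : Summable (fun k : ℕ => (Real.sqrt (∫ ξ in I (N+k), ‖φ ξ‖^2))^2) := by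
    simp only [hbsq]; exact hg
  have hb2tsum : (∑' k : ℕ, (Real.sqrt (∫ ξ in I (N+k), ‖φ ξ‖^2))^2)
      = ∫ ξ in Set.Ici (Real.log N), ‖φ ξ‖^2 := by
    simp only [hbsq]; exact hbHasSum.tsum_eq
  have htk : Summable (fun k : ℕ => ((((N+k : ℕ):ℝ))^2)⁻¹) := by
    have hbase : Summable (fun n : ℕ => (((n : ℕ):ℝ)^2)⁻¹) := by
      simp only [← Real.rpow_natCast]
      exact Real.summable_nat_rpow_inv.2 (by norm_num)
    have h := (summable_nat_add_iff (f := fun n : ℕ => (((n : ℕ):ℝ)^2)⁻¹) N).2 hbase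
    refine h.congr fun k => ?_
    rw [Nat.add_comm]
  have hcsqle : ∀ k : ℕ, (‖s - 1/2‖ * ((N+k : ℕ):ℝ) ^ (-s.re - 1))^2
      ≤ (‖s - 1/2‖^2 * (N:ℝ) ^ (-(2*s.re))) * ((((N+k : ℕ):ℝ))^2)⁻¹ := by
    intro k
    have hp : (0:ℝ) < ((N+k : ℕ):ℝ) := hnpos _ (Nat.le_add_right N k)
    rw [mul_pow, my_csq _ hp s.re, ← mul_assoc, mul_assoc _ _ (((((N+k : ℕ):ℝ))^2)⁻¹)]
    have hmono : ((N+k : ℕ):ℝ) ^ (-(2*s.re)) ≤ (N:ℝ) ^ (-(2*s.re)) :=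
      Real.rpow_le_rpow_of_nonpos hNp (by exact_mod_cast Nat.le_add_right N k)
        (by linarith)
    rw [mul_assoc]
    gcongr
  have hc2 : Summable (fun k : ℕ =>
      (‖s - 1/2‖ * ((N+k : ℕ):ℝ) ^ (-s.re - 1))^2) :=
    Summable.of_nonneg_of_le (fun k => sq_nonneg _) hcsqle (htk.mul_left _)
  have hc2tsum : (∑' k : ℕ, (‖s - 1/2‖ * ((N+k : ℕ):ℝ) ^ (-s.re - 1))^2)
      ≤ (‖s - 1/2‖^2 * (N:ℝ) ^ (-(2*s.re))) * (2/(N:ℝ)) := by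
    calc (∑' k : ℕ, (‖s - 1/2‖ * ((N+k : ℕ):ℝ) ^ (-s.re - 1))^2)
        ≤ ∑' k : ℕ, (‖s - 1/2‖^2 * (N:ℝ) ^ (-(2*s.re)))
            * ((((N+k : ℕ):ℝ))^2)⁻¹ :=
          Summable.tsum_le_tsum hcsqle hc2 (htk.mul_left _)
      _ = (‖s - 1/2‖^2 * (N:ℝ) ^ (-(2*s.re)))
            * ∑' k : ℕ, ((((N+k : ℕ):ℝ))^2)⁻¹ := tsum_mul_left
      _ ≤ (‖s - 1/2‖^2 * (N:ℝ) ^ (-(2*s.re))) * (2/(N:ℝ)) := by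
          refine mul_le_mul_of_nonneg_left (my_tail N hN) (by positivity)
  have hXbound : Real.sqrt (∑' k : ℕ,
        (‖s - 1/2‖ * ((N+k : ℕ):ℝ) ^ (-s.re - 1))^2)
      ≤ 2 * ‖s - 1/2‖ * (N:ℝ) ^ (-s.re - 1/2) := by
    have e1 : ((N:ℝ) ^ (-s.re - 1/2))^2 = (N:ℝ) ^ (-(2*s.re)) * (N:ℝ)⁻¹ := by
      rw [show ((N:ℝ) ^ (-s.re - 1/2))^(2:ℕ) = (N:ℝ) ^ ((-s.re - 1/2)*2:ℝ) from by
          rw [Real.rpow_mul hNp.le, Real.rpow_two],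
        show ((N:ℝ))⁻¹ = (N:ℝ) ^ ((-1:ℝ)) from (Real.rpow_neg_one _).symm,
        ← Real.rpow_add hNp]
      congr 1; ring
    have h4 : (‖s - 1/2‖^2 * (N:ℝ) ^ (-(2*s.re))) * (2/(N:ℝ))
        ≤ (2 * ‖s - 1/2‖ * (N:ℝ) ^ (-s.re - 1/2))^2 := by
      rw [mul_pow, mul_pow, e1]
      have h2N : (2:ℝ)/(N:ℝ) = 2 * ((N:ℝ))⁻¹ := by rw [div_eq_mul_inv]
      rw [h2N]
      nlinarith [mul_nonneg (mul_nonneg (mul_nonneg (sq_nonneg (‖s - 1/2‖))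
        (Real.rpow_nonneg hNp.le (-(2*s.re)))) (inv_nonneg.2 hNp.le)) (le_refl (0:ℝ)),
        mul_nonneg (mul_nonneg (sq_nonneg (‖s - 1/2‖))
        (Real.rpow_nonneg hNp.le (-(2*s.re)))) (inv_nonneg.2 hNp.le)]
    calc Real.sqrt (∑' k : ℕ, (‖s - 1/2‖ * ((N+k : ℕ):ℝ) ^ (-s.re - 1))^2)
        ≤ Real.sqrt ((2 * ‖s - 1/2‖ * (N:ℝ) ^ (-s.re - 1/2))^2) :=
          Real.sqrt_le_sqrt (le_trans hc2tsum h4)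
      _ = 2 * ‖s - 1/2‖ * (N:ℝ) ^ (-s.re - 1/2) :=
          Real.sqrt_sq (by positivity)
  -- assemble
  have hdiff : HasSum (fun k : ℕ =>
      (∫ ξ in I (N+k), φ ξ * Complex.exp (-(s - 1/2) * (ξ:ℂ)))
        - a (N+k) * ((N+k : ℕ):ℂ) ^ (-s))
      ((∫ ξ in Set.Ici (Real.log N), φ ξ * Complex.exp (-(s - 1/2) * (ξ:ℂ)))
        - ∑' n : ℕ, a n * (n:ℂ) ^ (-s)) := hPHasSum.sub hQhasSum
  have hsum_cb : Summable (fun k : ℕ =>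
      (‖s - 1/2‖ * ((N+k : ℕ):ℝ) ^ (-s.re - 1))
        * Real.sqrt (∫ ξ in I (N+k), ‖φ ξ‖^2)) := by
    refine Summable.of_nonneg_of_le
      (fun k => mul_nonneg (by positivity) (Real.sqrt_nonneg _)) (fun k => ?_)
      ((hc2.add hb2).div_const 2)
    nlinarith [sq_nonneg ((‖s - 1/2‖ * ((N+k : ℕ):ℝ) ^ (-s.re - 1))
      - Real.sqrt (∫ ξ in I (N+k), ‖φ ξ‖^2))]
  have hsum_norm : Summable (fun k : ℕ =>
      ‖(∫ ξ in I (N+k), φ ξ * Complex.exp (-(s - 1/2) * (ξ:ℂ)))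
        - a (N+k) * ((N+k : ℕ):ℂ) ^ (-s)‖) :=
    Summable.of_nonneg_of_le (fun k => norm_nonneg _) hterm hsum_cb
  rw [show (1:ℂ)/2 = (1/2 : ℂ) from rfl] at *
  rw [← hdiff.tsum_eq]
  calc ‖∑' k : ℕ, ((∫ ξ in I (N+k), φ ξ * Complex.exp (-(s - 1/2) * (ξ:ℂ)))
          - a (N+k) * ((N+k : ℕ):ℂ) ^ (-s))‖
      ≤ ∑' k : ℕ, ‖(∫ ξ in I (N+k), φ ξ * Complex.exp (-(s - 1/2) * (ξ:ℂ)))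
          - a (N+k) * ((N+k : ℕ):ℂ) ^ (-s)‖ := norm_tsum_le_tsum_norm hsum_norm
    _ ≤ ∑' k : ℕ, (‖s - 1/2‖ * ((N+k : ℕ):ℝ) ^ (-s.re - 1))
          * Real.sqrt (∫ ξ in I (N+k), ‖φ ξ‖^2) :=
        Summable.tsum_le_tsum hterm hsum_norm hsum_cb
    _ ≤ Real.sqrt (∑' k : ℕ,
            (‖s - 1/2‖ * ((N+k : ℕ):ℝ) ^ (-s.re - 1))^2)
          * Real.sqrt (∑' k : ℕ, (Real.sqrt (∫ ξ in I (N+k), ‖φ ξ‖^2))^2) :=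
        my_tsum_cs _ _ (fun k => by positivity) (fun k => Real.sqrt_nonneg _) hc2 hb2
    _ ≤ (2 * ‖s - 1/2‖ * (N:ℝ) ^ (-s.re - 1/2))
          * Real.sqrt (∫ ξ in Set.Ici (Real.log N), ‖φ ξ‖^2) := by
        rw [hb2tsum]
        exact mul_le_mul_of_nonneg_right hXbound (Real.sqrt_nonneg _)
    _ = 2 * ‖s - 1/2‖ * (N:ℝ) ^ (-s.re - 1/2)
          * Real.sqrt (∫ ξ in Set.Ici (Real.log N), ‖φ ξ‖^2) := by ring
end

section
/- There exists an absolute constant c′ > 0 (independent of R) with the following property. Let R ≥ 2, let Ω = Ω(R,2) = {σ + it ∈ ℂ : 1/2 ≤ σ ≤ 5/2, −R ≤ t ≤ R}, let ε > 0, and let g : ℂ → ℂ be a continuous function supported on Ω with |g(s)| ≤ ε for all s. Define u(s) = (1/π) ∫_Ω g(w)/(s − w) dm(w). Then for every σ ≥ 1/2, (∫_ℝ |u(σ + it)|² dt)^{1/2} ≤ c′ ε √R log R. -/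
open MeasureTheory

/-- The rectangle `Ω(R, 2) = {σ + it : 1/2 ≤ σ ≤ 5/2, -R ≤ t ≤ R}`. -/
def OmegaRect (R : ℝ) : Set ℂ := {w : ℂ | 1 / 2 ≤ w.re ∧ w.re ≤ 5 / 2 ∧ |w.im| ≤ R}

/-! ### Auxiliary lemmas -/

private lemma omega_eq (R : ℝ) :
    OmegaRect R = Set.Icc (1/2 : ℝ) (5/2) ×ℂ Set.Icc (-R) R := by
  ext w
  simp [OmegaRect, Complex.mem_reProdIm, abs_le, and_assoc]

private lemma lint_Icc_eq (a b : ℝ) (hab : a ≤ b) (f : ℝ → ℝ)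
    (hf : IntervalIntegrable f volume a b) (hnn : ∀ x ∈ Set.Ioc a b, 0 ≤ f x) :
    ∫⁻ x in Set.Icc a b, ENNReal.ofReal (f x) = ENNReal.ofReal (∫ x in a..b, f x) := by
  rw [← Measure.restrict_congr_set Ioc_ae_eq_Icc, intervalIntegral.integral_of_le hab,
    ofReal_integral_eq_lintegral_ofReal]
  · exact (intervalIntegrable_iff_integrableOn_Ioc_of_le hab).mp hf
  · exact (ae_restrict_iff' measurableSet_Ioc).mpr (Filter.Eventually.of_forall hnn)

private lemma lint_reflect (f : ℝ → ENNReal) (S : Set ℝ) :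
    ∫⁻ x in (fun x : ℝ => -x) ⁻¹' S, f (-x) = ∫⁻ y in S, f y :=
  (Measure.measurePreserving_neg (volume : Measure ℝ)).setLIntegral_comp_preimage_emb
    (MeasurableEquiv.neg ℝ).measurableEmbedding f S
private lemma sqrt_piece (a b c : ℝ) :
    ∫⁻ x in Set.Icc a b ∩ Set.Ioi c, (ENNReal.ofReal |x - c|) ^ (-(1/2) : ℝ)
      ≤ ENNReal.ofReal (2 * Real.sqrt (b - a)) := by
  rcases le_or_gt b c with h | hcb
  · have he : Set.Icc a b ∩ Set.Ioi c = (∅ : Set ℝ) := by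
      ext x
      simp only [Set.mem_inter_iff, Set.mem_Icc, Set.mem_Ioi, Set.mem_empty_iff_false, iff_false,
        not_and, and_imp]
      intro _ h2 h3
      linarith
    rw [he]
    simp
  rcases lt_or_ge b a with hba | hab
  · have he : Set.Icc a b = (∅ : Set ℝ) := Set.Icc_eq_empty (not_le.mpr hba)
    rw [he]
    simp
  set a' := max a c with ha'
  have ha'c : c ≤ a' := le_max_right _ _
  have ha'b : a' ≤ b := max_le hab hcb.le
  have haa' : a ≤ a' := le_max_left _ _
  have hsub : Set.Icc a b ∩ Set.Ioi c ⊆ Set.Icc a' b := by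
    rintro x ⟨⟨h1, h2⟩, h3⟩
    exact ⟨max_le h1 (Set.mem_Ioi.mp h3).le, h2⟩
  refine le_trans (lintegral_mono_set hsub) ?_
  have hcongr : ∫⁻ x in Set.Icc a' b, (ENNReal.ofReal |x - c|) ^ (-(1/2) : ℝ)
      = ∫⁻ x in Set.Icc a' b, ENNReal.ofReal ((x - c) ^ (-(1/2) : ℝ)) := by
    have hae : ∀ᵐ x : ℝ, x ≠ c := by
      have : (volume : Measure ℝ) {c} = 0 := measure_singleton c
      rw [ae_iff]
      simpa [Set.setOf_eq_eq_singleton'] using this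
    refine setLIntegral_congr_fun_ae measurableSet_Icc ?_
    filter_upwards [hae] with x hx hmem
    have hxc : c < x := lt_of_le_of_ne (le_trans ha'c hmem.1) (Ne.symm hx)
    rw [abs_of_pos (by linarith), ENNReal.ofReal_rpow_of_pos (by linarith)]
  rw [hcongr]
  have hint : IntervalIntegrable (fun x => (x - c) ^ (-(1/2) : ℝ)) volume a' b := by
    have := (intervalIntegral.intervalIntegrable_rpow' (a := a' - c) (b := b - c)
      (r := (-(1/2) : ℝ)) (by norm_num)).comp_sub_right c
    simpa using this
  rw [lint_Icc_eq a' b ha'b _ hint (fun x hx => Real.rpow_nonneg (by linarith [hx.1]) _)]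
  apply ENNReal.ofReal_le_ofReal
  have hval : ∫ x in a'..b, (x - c) ^ (-(1/2) : ℝ)
      = ((b - c) ^ ((1:ℝ)/2) - (a' - c) ^ ((1:ℝ)/2)) / (1/2) := by
    rw [intervalIntegral.integral_comp_sub_right (fun x => x ^ (-(1/2) : ℝ)) c,
      integral_rpow (Or.inl (by norm_num))]
    norm_num
  rw [hval]
  have h1 : (b - c) ^ ((1:ℝ)/2) = Real.sqrt (b - c) := (Real.sqrt_eq_rpow _).symm
  have h2 : (a' - c) ^ ((1:ℝ)/2) = Real.sqrt (a' - c) := (Real.sqrt_eq_rpow _).symm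
  rw [h1, h2]
  have hsubadd : Real.sqrt (b - c) ≤ Real.sqrt (a' - c) + Real.sqrt (b - a') := by
    have : b - c = (a' - c) + (b - a') := by ring
    rw [this]
    have hu : (0:ℝ) ≤ a' - c := by linarith
    have hv : (0:ℝ) ≤ b - a' := by linarith
    have hle : (a' - c) + (b - a') ≤ (Real.sqrt (a' - c) + Real.sqrt (b - a')) ^ 2 := by
      have e1 := Real.sq_sqrt hu
      have e2 := Real.sq_sqrt hv
      nlinarith [Real.sqrt_nonneg (a' - c), Real.sqrt_nonneg (b - a')]
    calc Real.sqrt ((a' - c) + (b - a'))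
        ≤ Real.sqrt ((Real.sqrt (a' - c) + Real.sqrt (b - a')) ^ 2) := Real.sqrt_le_sqrt hle
      _ = _ := Real.sqrt_sq (by positivity)
  have hmono : Real.sqrt (b - a') ≤ Real.sqrt (b - a) := Real.sqrt_le_sqrt (by linarith)
  linarith
private lemma sqrt_int (a b c : ℝ) :
    ∫⁻ x in Set.Icc a b, (ENNReal.ofReal |x - c|) ^ (-(1/2) : ℝ)
      ≤ ENNReal.ofReal (4 * Real.sqrt (b - a)) := by
  have hsplit : Set.Icc a b = (Set.Icc a b ∩ Set.Iic c) ∪ (Set.Icc a b ∩ Set.Ioi c) := by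
    rw [← Set.compl_Iic, Set.inter_union_compl]
  rw [hsplit]
  refine le_trans (lintegral_union_le _ _ _) ?_
  have hsum : ENNReal.ofReal (2 * Real.sqrt (b - a)) + ENNReal.ofReal (2 * Real.sqrt (b - a))
      = ENNReal.ofReal (4 * Real.sqrt (b - a)) := by
    rw [← ENNReal.ofReal_add (by positivity) (by positivity)]
    ring_nf
  rw [← hsum]
  refine add_le_add ?_ (sqrt_piece a b c)
  -- left piece via reflection
  have hsub : Set.Icc a b ∩ Set.Iic c
      ⊆ ((fun x : ℝ => -x) ⁻¹' (Set.Icc (-b) (-a) ∩ Set.Ioi (-c))) ∪ {c} := by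
    rintro x ⟨⟨h1, h2⟩, h3⟩
    rcases lt_or_eq_of_le (Set.mem_Iic.mp h3) with h | h
    · refine Or.inl ⟨⟨?_, ?_⟩, ?_⟩ <;> simp only [Set.mem_Ioi, Set.mem_preimage, Set.mem_Icc] <;> linarith
    · exact Or.inr (by simp [h])
  refine le_trans (lintegral_mono_set hsub) ?_
  refine le_trans (lintegral_union_le _ _ _) ?_
  rw [setLIntegral_measure_zero _ _ (measure_singleton c), add_zero]
  have hre : ∫⁻ x in (fun x : ℝ => -x) ⁻¹' (Set.Icc (-b) (-a) ∩ Set.Ioi (-c)),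
      (ENNReal.ofReal |x - c|) ^ (-(1/2) : ℝ)
      = ∫⁻ y in Set.Icc (-b) (-a) ∩ Set.Ioi (-c), (ENNReal.ofReal |y - (-c)|) ^ (-(1/2) : ℝ) := by
    have := lint_reflect (fun y => (ENNReal.ofReal |y - (-c)|) ^ (-(1/2) : ℝ))
      (Set.Icc (-b) (-a) ∩ Set.Ioi (-c))
    rw [← this]
    congr 1
    ext x
    congr 1
    rw [show -x - -c = -(x - c) by ring, abs_neg]
  rw [hre]
  refine le_trans (sqrt_piece (-b) (-a) (-c)) ?_
  rw [show -a - -b = b - a by ring]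
private lemma log_piece (c R : ℝ) (hR : 2 ≤ R) :
    ∫⁻ x in Set.Icc (c + 4) (c + 3 * R), ENNReal.ofReal |x - c|⁻¹
      ≤ ENNReal.ofReal (Real.log R) := by
  have h3R : (4:ℝ) ≤ 3 * R := by linarith
  have h8 : c + 4 ≤ c + 3 * R := by linarith
  have hne : ∀ x ∈ Set.uIcc (c + 4) (c + 3 * R), x - c ≠ 0 := by
    intro x hx
    rw [Set.uIcc_of_le h8, Set.mem_Icc] at hx
    have := hx.1
    intro h0
    nlinarith
  have hcongr : ∫⁻ x in Set.Icc (c + 4) (c + 3 * R), ENNReal.ofReal |x - c|⁻¹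
      = ∫⁻ x in Set.Icc (c + 4) (c + 3 * R), ENNReal.ofReal (x - c)⁻¹ := by
    refine setLIntegral_congr_fun measurableSet_Icc ?_
    intro x hx
    dsimp only
    rw [abs_of_pos (by linarith [hx.1])]
  rw [hcongr]
  have hint : IntervalIntegrable (fun x => (x - c)⁻¹) volume (c + 4) (c + 3 * R) :=
    (ContinuousOn.inv₀ (by fun_prop) hne).intervalIntegrable
  rw [lint_Icc_eq _ _ h8 _ hint (fun x hx => by
    have h0 : (0:ℝ) < x - c := by linarith [hx.1]
    positivity)]
  apply ENNReal.ofReal_le_ofReal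
  have hval : ∫ x in (c + 4)..(c + 3 * R), (x - c)⁻¹ = ∫ x in (4:ℝ)..(3 * R), x⁻¹ := by
    have := intervalIntegral.integral_comp_sub_right (a := c + 4) (b := c + 3 * R)
      (fun x => x⁻¹) c
    simpa using this
  have h08 : (0:ℝ) ∉ Set.uIcc (4:ℝ) (3 * R) := by
    rw [Set.uIcc_of_le h3R]
    simp only [Set.mem_Icc, not_and, not_le]
    intro h
    norm_num at h
  rw [hval, integral_inv h08]
  have hlog : Real.log (3 * R / 4) ≤ Real.log R := by
    apply Real.log_le_log (by positivity)
    linarith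
  exact hlog
private lemma log_int (R t : ℝ) (hR : 2 ≤ R) (ht : |t| ≤ 2 * R) :
    ∫⁻ x in Set.Icc (-R) R ∩ (Set.Icc (t - 4) (t + 4))ᶜ, ENNReal.ofReal |x - t|⁻¹
      ≤ ENNReal.ofReal (2 * Real.log R) := by
  have habs := abs_le.mp ht
  have hsub : Set.Icc (-R) R ∩ (Set.Icc (t - 4) (t + 4))ᶜ
      ⊆ Set.Icc (t - 3 * R) (t - 4) ∪ Set.Icc (t + 4) (t + 3 * R) := by
    rintro x ⟨⟨h1, h2⟩, h3⟩
    simp only [Set.mem_compl_iff, Set.mem_Icc, not_and, not_le] at h3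
    rcases le_or_gt x (t - 4) with h | h
    · exact Or.inl ⟨by linarith, h⟩
    · have h4 : t + 4 < x := h3 (by linarith)
      exact Or.inr ⟨h4.le, by linarith⟩
  refine le_trans (lintegral_mono_set hsub) (le_trans (lintegral_union_le _ _ _) ?_)
  have hleft : ∫⁻ x in Set.Icc (t - 3 * R) (t - 4), ENNReal.ofReal |x - t|⁻¹
      ≤ ENNReal.ofReal (Real.log R) := by
    have hset : Set.Icc (t - 3 * R) (t - 4)
        = (fun x : ℝ => -x) ⁻¹' Set.Icc (-t + 4) (-t + 3 * R) := by
      ext x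
      simp only [Set.mem_Icc, Set.mem_preimage]
      constructor <;> intro h <;> constructor <;> linarith [h.1, h.2]
    have hfun : ∀ x : ℝ, ENNReal.ofReal |x - t|⁻¹
        = (fun y => ENNReal.ofReal |y - (-t)|⁻¹) (-x) := by
      intro x
      simp only
      rw [show -x - -t = -(x - t) by ring, abs_neg]
    calc ∫⁻ x in Set.Icc (t - 3 * R) (t - 4), ENNReal.ofReal |x - t|⁻¹
        = ∫⁻ x in (fun x : ℝ => -x) ⁻¹' Set.Icc (-t + 4) (-t + 3 * R),
            (fun y => ENNReal.ofReal |y - (-t)|⁻¹) (-x) := by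
          rw [← hset]
          exact lintegral_congr fun x => hfun x
      _ = ∫⁻ y in Set.Icc (-t + 4) (-t + 3 * R), ENNReal.ofReal |y - (-t)|⁻¹ := by
          exact lint_reflect (fun y => ENNReal.ofReal |y - (-t)|⁻¹) (Set.Icc (-t + 4) (-t + 3 * R))
      _ ≤ ENNReal.ofReal (Real.log R) := by
          have := log_piece (-t) R hR
          simpa [add_comm] using this
  have hright : ∫⁻ x in Set.Icc (t + 4) (t + 3 * R), ENNReal.ofReal |x - t|⁻¹
      ≤ ENNReal.ofReal (Real.log R) := log_piece t R hR
  calc _ ≤ ENNReal.ofReal (Real.log R) + ENNReal.ofReal (Real.log R) := add_le_add hleft hright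
    _ = ENNReal.ofReal (2 * Real.log R) := by
        rw [← ENNReal.ofReal_add (Real.log_nonneg (by linarith)) (Real.log_nonneg (by linarith))]
        ring_nf
private lemma tail_piece (R : ℝ) (hR : 2 ≤ R) :
    ∫⁻ t in Set.Ioi (2 * R), ENNReal.ofReal ((8 * R / |t|) ^ 2) ≤ ENNReal.ofReal (32 * R) := by
  have hpos : (0:ℝ) < 2 * R := by linarith
  have hcongr : ∫⁻ t in Set.Ioi (2 * R), ENNReal.ofReal ((8 * R / |t|) ^ 2)
      = ∫⁻ t in Set.Ioi (2 * R), ENNReal.ofReal (64 * R ^ 2 * t ^ (-2 : ℝ)) := by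
    refine setLIntegral_congr_fun measurableSet_Ioi ?_
    intro t ht
    have htpos : (0:ℝ) < t := lt_trans hpos ht
    dsimp only
    rw [abs_of_pos htpos, div_pow, Real.rpow_neg htpos.le]
    rw [show ((2:ℝ):ℝ) = ((2:ℕ):ℝ) by norm_num, Real.rpow_natCast]
    field_simp
    ring
  rw [hcongr]
  have hig : IntegrableOn (fun t : ℝ => 64 * R ^ 2 * t ^ (-2 : ℝ)) (Set.Ioi (2 * R)) :=
    (integrableOn_Ioi_rpow_of_lt (by norm_num) hpos).const_mul _
  rw [← ofReal_integral_eq_lintegral_ofReal hig]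
  · apply ENNReal.ofReal_le_ofReal
    rw [MeasureTheory.integral_const_mul, integral_Ioi_rpow_of_lt (by norm_num) hpos]
    have hRne : R ≠ 0 := by linarith
    have h1 : -(2 * R) ^ ((-2 : ℝ) + 1) / ((-2 : ℝ) + 1) = (2 * R)⁻¹ := by
      rw [show (-2 : ℝ) + 1 = -1 by norm_num, Real.rpow_neg_one]
      ring
    rw [h1, show 64 * R ^ 2 * (2 * R)⁻¹ = 32 * R by field_simp; ring]
  · refine (ae_restrict_iff' measurableSet_Ioi).mpr (Filter.Eventually.of_forall ?_)
    intro t ht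
    have htpos : (0:ℝ) < t := lt_trans hpos ht
    positivity

private lemma tail_int (R : ℝ) (hR : 2 ≤ R) :
    ∫⁻ t in {t : ℝ | 2 * R < |t|}, ENNReal.ofReal ((8 * R / |t|) ^ 2)
      ≤ ENNReal.ofReal (64 * R) := by
  have hset : {t : ℝ | 2 * R < |t|} = Set.Iio (-(2 * R)) ∪ Set.Ioi (2 * R) := by
    ext t
    simp only [Set.mem_setOf_eq, Set.mem_union, Set.mem_Iio, Set.mem_Ioi, lt_abs, lt_neg]
    tauto
  rw [hset]
  refine le_trans (lintegral_union_le _ _ _) ?_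
  have hleft : ∫⁻ t in Set.Iio (-(2 * R)), ENNReal.ofReal ((8 * R / |t|) ^ 2)
      ≤ ENNReal.ofReal (32 * R) := by
    have hset2 : Set.Iio (-(2 * R)) = (fun x : ℝ => -x) ⁻¹' Set.Ioi (2 * R) := by
      ext x
      simp only [Set.mem_Iio, Set.mem_preimage, Set.mem_Ioi]
      constructor <;> intro <;> linarith
    rw [hset2]
    calc ∫⁻ t in (fun x : ℝ => -x) ⁻¹' Set.Ioi (2 * R), ENNReal.ofReal ((8 * R / |t|) ^ 2)
        = ∫⁻ t in (fun x : ℝ => -x) ⁻¹' Set.Ioi (2 * R),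
            (fun y => ENNReal.ofReal ((8 * R / |y|) ^ 2)) (-t) := by
          refine lintegral_congr fun t => ?_
          simp only [abs_neg]
      _ = ∫⁻ y in Set.Ioi (2 * R), ENNReal.ofReal ((8 * R / |y|) ^ 2) := by
          exact lint_reflect (fun y => ENNReal.ofReal ((8 * R / |y|) ^ 2)) (Set.Ioi (2 * R))
      _ ≤ ENNReal.ofReal (32 * R) := tail_piece R hR
  calc _ ≤ ENNReal.ofReal (32 * R) + ENNReal.ofReal (32 * R) :=
        add_le_add hleft (tail_piece R hR)
    _ = ENNReal.ofReal (64 * R) := by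
        rw [← ENNReal.ofReal_add (by linarith) (by linarith)]
        ring_nf
private lemma lint_reProdIm_mul (F G : ℝ → ENNReal) (hF : Measurable F) (hG : Measurable G)
    (s t : Set ℝ) :
    ∫⁻ w in s ×ℂ t, F w.re * G w.im = (∫⁻ x in s, F x) * (∫⁻ y in t, G y) := by
  have hpre : (⇑Complex.measurableEquivRealProd.symm) ⁻¹' (s ×ℂ t) = s ×ˢ t := by
    ext p
    simp [Complex.mem_reProdIm, Complex.measurableEquivRealProd_symm_apply]
  have h := (Complex.volume_preserving_equiv_real_prod.symm).setLIntegral_comp_preimage_emb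
      Complex.measurableEquivRealProd.symm.measurableEmbedding
      (fun w : ℂ => F w.re * G w.im) (s ×ℂ t)
  rw [← h, hpre]
  have heq : ∀ p : ℝ × ℝ, F (Complex.measurableEquivRealProd.symm p).re
      * G (Complex.measurableEquivRealProd.symm p).im = F p.1 * G p.2 := by
    intro p
    rw [Complex.measurableEquivRealProd_symm_apply]
  calc ∫⁻ p in s ×ˢ t, F (Complex.measurableEquivRealProd.symm p).re
        * G (Complex.measurableEquivRealProd.symm p).im
      = ∫⁻ p in s ×ˢ t, F p.1 * G p.2 := lintegral_congr fun p => heq p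
    _ = (∫⁻ x in s, F x) * (∫⁻ y in t, G y) := by
        rw [Measure.volume_eq_prod, ← Measure.prod_restrict,
          lintegral_prod_mul hF.aemeasurable hG.aemeasurable]
private lemma re_im_z (σ t : ℝ) (w : ℂ) :
    ((σ:ℂ) + (t:ℂ) * Complex.I - w).re = σ - w.re
      ∧ ((σ:ℂ) + (t:ℂ) * Complex.I - w).im = t - w.im := by
  constructor <;> simp

private lemma pb1 (σ t : ℝ) (w : ℂ) :
    ((‖(σ:ℂ) + (t:ℂ) * Complex.I - w‖₊ : ENNReal))⁻¹
      ≤ (ENNReal.ofReal |w.re - σ|) ^ (-(1/2) : ℝ) * (ENNReal.ofReal |w.im - t|) ^ (-(1/2) : ℝ) := by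
  set z := (σ:ℂ) + (t:ℂ) * Complex.I - w with hz
  obtain ⟨hre, him⟩ := re_im_z σ t w
  by_cases ha : w.re = σ
  · have h1 : ENNReal.ofReal |w.re - σ| = 0 := by simp [ha]
    rw [h1, ENNReal.zero_rpow_of_neg (by norm_num)]
    have h2 : (ENNReal.ofReal |w.im - t|) ^ (-(1/2) : ℝ) ≠ 0 := by
      rw [Ne, ENNReal.rpow_eq_zero_iff]
      push_neg
      constructor
      · intro _
        norm_num
      · intro h
        exact absurd h ENNReal.ofReal_ne_top
    rw [ENNReal.top_mul h2]
    exact le_top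
  by_cases hb : w.im = t
  · have h1 : ENNReal.ofReal |w.im - t| = 0 := by simp [hb]
    rw [h1, ENNReal.zero_rpow_of_neg (by norm_num)]
    have h2 : (ENNReal.ofReal |w.re - σ|) ^ (-(1/2) : ℝ) ≠ 0 := by
      rw [Ne, ENNReal.rpow_eq_zero_iff]
      push_neg
      constructor
      · intro _
        norm_num
      · intro h
        exact absurd h ENNReal.ofReal_ne_top
    rw [ENNReal.mul_top h2]
    exact le_top
  have hp : (0:ℝ) < |w.re - σ| := abs_pos.mpr (sub_ne_zero.mpr ha)
  have hq : (0:ℝ) < |w.im - t| := abs_pos.mpr (sub_ne_zero.mpr hb)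
  have hznorm : (0:ℝ) < ‖z‖ := by
    have : z ≠ 0 := fun h0 => hb (by
      have := congrArg Complex.im h0
      rw [him] at this
      simp at this
      linarith)
    exact norm_pos_iff.mpr this
  rw [← enorm_eq_nnnorm, ← ofReal_norm, ← ENNReal.ofReal_inv_of_pos hznorm,
    ENNReal.ofReal_rpow_of_pos hp, ENNReal.ofReal_rpow_of_pos hq,
    ← ENNReal.ofReal_mul (Real.rpow_nonneg (abs_nonneg _) _)]
  apply ENNReal.ofReal_le_ofReal
  rw [← Real.mul_rpow (abs_nonneg _) (abs_nonneg _)]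
  set p := |w.re - σ| * |w.im - t| with hpq
  have hppos : (0:ℝ) < p := mul_pos hp hq
  have key : p ^ ((1:ℝ)/2) ≤ ‖z‖ := by
    have h1 : p ≤ ‖z‖ ^ 2 := by
      have hsq : ‖z‖ ^ 2 = z.re ^ 2 + z.im ^ 2 := by
        rw [Complex.sq_norm, Complex.normSq_apply]
        ring
      rw [hsq, hre, him]
      have e1 : |w.re - σ| = |σ - w.re| := abs_sub_comm _ _
      have e2 : |w.im - t| = |t - w.im| := abs_sub_comm _ _
      rw [hpq, e1, e2]
      nlinarith [sq_abs (σ - w.re), sq_abs (t - w.im), sq_nonneg (|σ - w.re| - |t - w.im|),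
        abs_nonneg (σ - w.re), abs_nonneg (t - w.im)]
    calc p ^ ((1:ℝ)/2) = Real.sqrt p := (Real.sqrt_eq_rpow p).symm
      _ ≤ Real.sqrt (‖z‖ ^ 2) := Real.sqrt_le_sqrt h1
      _ = ‖z‖ := Real.sqrt_sq hznorm.le
  have hppow : (0:ℝ) < p ^ ((1:ℝ)/2) := Real.rpow_pos_of_pos hppos _
  calc ‖z‖⁻¹ ≤ (p ^ ((1:ℝ)/2))⁻¹ := inv_anti₀ hppow key
    _ = p ^ (-(1/2) : ℝ) := (Real.rpow_neg hppos.le _).symm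

private lemma pb2 (σ t : ℝ) (w : ℂ) (hb : w.im ≠ t) :
    ((‖(σ:ℂ) + (t:ℂ) * Complex.I - w‖₊ : ENNReal))⁻¹ ≤ ENNReal.ofReal |w.im - t|⁻¹ := by
  set z := (σ:ℂ) + (t:ℂ) * Complex.I - w with hz
  obtain ⟨hre, him⟩ := re_im_z σ t w
  have hq : (0:ℝ) < |w.im - t| := abs_pos.mpr (sub_ne_zero.mpr hb)
  have hnorm : |w.im - t| ≤ ‖z‖ := by
    have : |z.im| ≤ ‖z‖ := Complex.abs_im_le_norm z
    rw [him] at this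
    rw [abs_sub_comm]
    simpa using this
  have hznorm : (0:ℝ) < ‖z‖ := lt_of_lt_of_le hq hnorm
  rw [← enorm_eq_nnnorm, ← ofReal_norm, ← ENNReal.ofReal_inv_of_pos hznorm]
  exact ENNReal.ofReal_le_ofReal (inv_anti₀ hq hnorm)

private lemma meas_aux (c e : ℝ) : Measurable fun x : ℝ => (ENNReal.ofReal |x - c|) ^ e :=
  ENNReal.continuous_rpow_const.measurable.comp
    ((measurable_id.sub_const c).abs.ennreal_ofReal)

private lemma Kbound_near (R σ t : ℝ) (hR : 2 ≤ R) (ht : |t| ≤ 2 * R) :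
    ∫⁻ w in OmegaRect R, ((‖(σ:ℂ) + (t:ℂ) * Complex.I - w‖₊ : ENNReal))⁻¹
      ≤ ENNReal.ofReal (300 * Real.log R) := by
  rw [omega_eq]
  set N := Set.Icc (-R) R ∩ Set.Icc (t - 4) (t + 4) with hN
  set Fr := Set.Icc (-R) R ∩ (Set.Icc (t - 4) (t + 4))ᶜ with hFr
  have hunion : Set.Icc (1/2 : ℝ) (5/2) ×ℂ Set.Icc (-R) R
      = (Set.Icc (1/2 : ℝ) (5/2) ×ℂ N) ∪ (Set.Icc (1/2 : ℝ) (5/2) ×ℂ Fr) := by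
    rw [hN, hFr]
    ext w
    simp only [Complex.mem_reProdIm, Set.mem_union, Set.mem_inter_iff, Set.mem_compl_iff]
    tauto
  rw [hunion]
  refine le_trans (lintegral_union_le _ _ _) ?_
  have hnear : ∫⁻ w in Set.Icc (1/2 : ℝ) (5/2) ×ℂ N,
      ((‖(σ:ℂ) + (t:ℂ) * Complex.I - w‖₊ : ENNReal))⁻¹ ≤ ENNReal.ofReal 72 := by
    have hmeas : Measurable fun w : ℂ =>
        (ENNReal.ofReal |w.re - σ|) ^ (-(1/2) : ℝ) * (ENNReal.ofReal |w.im - t|) ^ (-(1/2) : ℝ) :=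
      ((meas_aux σ (-(1/2))).comp Complex.measurable_re).mul
        ((meas_aux t (-(1/2))).comp Complex.measurable_im)
    refine le_trans (setLIntegral_mono hmeas (fun w _ => pb1 σ t w)) ?_
    rw [lint_reProdIm_mul _ _ (meas_aux σ (-(1/2))) (meas_aux t (-(1/2)))]
    have h1 : ∫⁻ x in Set.Icc (1/2 : ℝ) (5/2), (ENNReal.ofReal |x - σ|) ^ (-(1/2) : ℝ)
        ≤ ENNReal.ofReal 6 := by
      refine le_trans (sqrt_int (1/2) (5/2) σ) (ENNReal.ofReal_le_ofReal ?_)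
      have hs : Real.sqrt ((5:ℝ)/2 - 1/2) ≤ 3/2 := by
        rw [show ((5:ℝ)/2 - 1/2) = 2 by norm_num]
        rw [show (3:ℝ)/2 = Real.sqrt ((3/2)^2) from (Real.sqrt_sq (by norm_num)).symm]
        exact Real.sqrt_le_sqrt (by norm_num)
      linarith
    have h2 : ∫⁻ y in N, (ENNReal.ofReal |y - t|) ^ (-(1/2) : ℝ) ≤ ENNReal.ofReal 12 := by
      refine le_trans (lintegral_mono_set Set.inter_subset_right) ?_
      refine le_trans (sqrt_int (t - 4) (t + 4) t) (ENNReal.ofReal_le_ofReal ?_)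
      have hs : Real.sqrt ((t + 4) - (t - 4)) ≤ 3 := by
        rw [show ((t + 4) - (t - 4)) = 8 by ring]
        rw [show (3:ℝ) = Real.sqrt (3^2) from (Real.sqrt_sq (by norm_num)).symm]
        exact Real.sqrt_le_sqrt (by norm_num)
      linarith
    calc _ ≤ ENNReal.ofReal 6 * ENNReal.ofReal 12 := mul_le_mul' h1 h2
      _ = ENNReal.ofReal 72 := by
          rw [← ENNReal.ofReal_mul (by norm_num)]
          norm_num
  have hfar : ∫⁻ w in Set.Icc (1/2 : ℝ) (5/2) ×ℂ Fr,
      ((‖(σ:ℂ) + (t:ℂ) * Complex.I - w‖₊ : ENNReal))⁻¹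
        ≤ ENNReal.ofReal (4 * Real.log R) := by
    have hmeas : Measurable fun w : ℂ => ENNReal.ofReal |w.im - t|⁻¹ :=
      (((measurable_id.sub_const t).abs.inv).ennreal_ofReal).comp Complex.measurable_im
    have hpt : ∀ w ∈ Set.Icc (1/2 : ℝ) (5/2) ×ℂ Fr,
        ((‖(σ:ℂ) + (t:ℂ) * Complex.I - w‖₊ : ENNReal))⁻¹ ≤ ENNReal.ofReal |w.im - t|⁻¹ := by
      intro w hw
      have him := (Complex.mem_reProdIm.mp hw).2
      rw [hFr] at him
      have h4 : w.im ∉ Set.Icc (t - 4) (t + 4) := him.2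
      have hne : w.im ≠ t := by
        intro h
        exact h4 (by rw [h]; constructor <;> linarith)
      exact pb2 σ t w hne
    refine le_trans (setLIntegral_mono hmeas hpt) ?_
    have hform : ∀ w : ℂ, ENNReal.ofReal |w.im - t|⁻¹
        = (fun _ : ℝ => (1 : ENNReal)) w.re * (fun y => ENNReal.ofReal |y - t|⁻¹) w.im := by
      intro w
      simp
    calc ∫⁻ w in Set.Icc (1/2 : ℝ) (5/2) ×ℂ Fr, ENNReal.ofReal |w.im - t|⁻¹
        = ∫⁻ w in Set.Icc (1/2 : ℝ) (5/2) ×ℂ Fr,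
            (fun _ : ℝ => (1 : ENNReal)) w.re * (fun y => ENNReal.ofReal |y - t|⁻¹) w.im :=
          lintegral_congr fun w => hform w
      _ = (∫⁻ _ in Set.Icc (1/2 : ℝ) (5/2), (1 : ENNReal))
            * ∫⁻ y in Fr, ENNReal.ofReal |y - t|⁻¹ :=
          lint_reProdIm_mul _ _ measurable_const
            (((measurable_id.sub_const t).abs.inv).ennreal_ofReal) _ _
      _ ≤ ENNReal.ofReal 2 * ENNReal.ofReal (2 * Real.log R) := by
          refine mul_le_mul' ?_ (log_int R t hR ht)
          rw [setLIntegral_one, Real.volume_Icc]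
          exact ENNReal.ofReal_le_ofReal (by norm_num)
      _ = ENNReal.ofReal (4 * Real.log R) := by
          rw [← ENNReal.ofReal_mul (by norm_num)]
          ring_nf
  have hlog : (1/2 : ℝ) ≤ Real.log R :=
    le_trans (by linarith [Real.log_two_gt_d9]) (Real.log_le_log (by norm_num) hR)
  calc _ ≤ ENNReal.ofReal 72 + ENNReal.ofReal (4 * Real.log R) := add_le_add hnear hfar
    _ = ENNReal.ofReal (72 + 4 * Real.log R) := by
        rw [← ENNReal.ofReal_add (by norm_num) (by linarith)]
    _ ≤ ENNReal.ofReal (300 * Real.log R) := ENNReal.ofReal_le_ofReal (by linarith)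

private lemma Kbound_far (R σ t : ℝ) (hR : 2 ≤ R) (ht : 2 * R < |t|) :
    ∫⁻ w in OmegaRect R, ((‖(σ:ℂ) + (t:ℂ) * Complex.I - w‖₊ : ENNReal))⁻¹
      ≤ ENNReal.ofReal (8 * R / |t|) := by
  have htpos : (0:ℝ) < |t| := by linarith
  have hvol : volume (OmegaRect R) = ENNReal.ofReal 2 * ENNReal.ofReal (2 * R) := by
    rw [omega_eq]
    have h := lint_reProdIm_mul (fun _ => 1) (fun _ => 1) measurable_const measurable_const
      (Set.Icc (1/2 : ℝ) (5/2)) (Set.Icc (-R) R)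
    simp only [one_mul, setLIntegral_one] at h
    rw [h, Real.volume_Icc, Real.volume_Icc]
    congr 1
    · norm_num
    · congr 1
      ring
  have hpt : ∀ w ∈ OmegaRect R,
      ((‖(σ:ℂ) + (t:ℂ) * Complex.I - w‖₊ : ENNReal))⁻¹ ≤ ENNReal.ofReal (2 / |t|) := by
    intro w hw
    obtain ⟨h1, h2, h3⟩ := hw
    have hge : |t| / 2 ≤ |w.im - t| := by
      have habs : |t| - |w.im| ≤ |t - w.im| := abs_sub_abs_le_abs_sub t w.im
      rw [abs_sub_comm]
      linarith
    have hne : w.im ≠ t := by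
      intro h
      rw [h] at hge
      simp at hge
      linarith
    refine le_trans (pb2 σ t w hne) (ENNReal.ofReal_le_ofReal ?_)
    rw [show (2 : ℝ) / |t| = (|t| / 2)⁻¹ by field_simp]
    exact inv_anti₀ (by linarith) hge
  refine le_trans (setLIntegral_mono measurable_const hpt) ?_
  rw [setLIntegral_const, hvol]
  rw [← ENNReal.ofReal_mul (by positivity), ← ENNReal.ofReal_mul (by positivity)]
  apply ENNReal.ofReal_le_ofReal
  apply le_of_eq
  ring

private lemma pb3 (ε σ t : ℝ) (g : ℂ → ℂ) (hbound : ∀ w : ℂ, ‖g w‖ ≤ ε) (w : ℂ) :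
    (‖g w / ((σ:ℂ) + (t:ℂ) * Complex.I - w)‖₊ : ENNReal)
      ≤ ENNReal.ofReal ε * ((‖(σ:ℂ) + (t:ℂ) * Complex.I - w‖₊ : ENNReal))⁻¹ := by
  set z := (σ:ℂ) + (t:ℂ) * Complex.I - w with hz
  by_cases hz0 : z = 0
  · simp [hz0]
  · have hzn : ‖z‖₊ ≠ 0 := nnnorm_ne_zero_iff.mpr hz0
    rw [nnnorm_div, ENNReal.coe_div hzn, div_eq_mul_inv]
    refine mul_le_mul_left ?_ _
    rw [← enorm_eq_nnnorm, ← ofReal_norm]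
    exact ENNReal.ofReal_le_ofReal (hbound w)

/-- `L²` bounds on vertical lines for the Cauchy transform of a bounded continuous
function supported on the rectangle `Ω(R, 2)`. -/
theorem cauchy_transform_L2_bound :
    ∃ c' > (0 : ℝ),
      ∀ R : ℝ, 2 ≤ R → ∀ ε : ℝ, 0 < ε → ∀ g : ℂ → ℂ, Continuous g →
        (∀ w : ℂ, w ∉ OmegaRect R → g w = 0) → (∀ w : ℂ, ‖g w‖ ≤ ε) →
        ∀ σ : ℝ, 1 / 2 ≤ σ →
          (∫⁻ t : ℝ,
              (‖(1 / (Real.pi : ℂ)) *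
                  ∫ w in OmegaRect R, g w / (((σ : ℂ) + (t : ℂ) * Complex.I) - w)‖₊ :
                ENNReal) ^ 2) ^ (1 / 2 : ℝ) ≤
            ENNReal.ofReal (c' * ε * Real.sqrt R * Real.log R) := by
  refine ⟨700, by norm_num, ?_⟩
  intro R hR ε hε g hg hsupp hbound σ hσ
  have hlog2 : (1/2 : ℝ) ≤ Real.log R :=
    le_trans (by linarith [Real.log_two_gt_d9]) (Real.log_le_log (by norm_num) hR)
  have hlogpos : (0:ℝ) < Real.log R := by linarith
  have hRpos : (0:ℝ) < R := by linarith
  set Y := 700 * ε * Real.sqrt R * Real.log R with hY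
  have hsqrtpos : (0:ℝ) < Real.sqrt R := Real.sqrt_pos.mpr hRpos
  have hYpos : (0:ℝ) < Y := by positivity
  -- pointwise bound on u(σ + it)
  have key : ∀ t : ℝ,
      (‖(1 / (Real.pi : ℂ)) *
          ∫ w in OmegaRect R, g w / (((σ : ℂ) + (t : ℂ) * Complex.I) - w)‖₊ : ENNReal)
        ≤ ENNReal.ofReal ε *
          ∫⁻ w in OmegaRect R, ((‖(σ:ℂ) + (t:ℂ) * Complex.I - w‖₊ : ENNReal))⁻¹ := by
    intro t
    rw [nnnorm_mul, ENNReal.coe_mul]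
    have hpi : (‖(1 / (Real.pi : ℂ))‖₊ : ENNReal) ≤ 1 := by
      rw [← enorm_eq_nnnorm, ← ofReal_norm]
      apply ENNReal.ofReal_le_one.mpr
      rw [norm_div, norm_one, Complex.norm_real, Real.norm_eq_abs, abs_of_pos Real.pi_pos,
        div_le_one Real.pi_pos]
      linarith [Real.pi_gt_three]
    calc (‖(1 / (Real.pi : ℂ))‖₊ : ENNReal)
          * (‖∫ w in OmegaRect R, g w / (((σ : ℂ) + (t : ℂ) * Complex.I) - w)‖₊ : ENNReal)
        ≤ 1 * (‖∫ w in OmegaRect R, g w / (((σ : ℂ) + (t : ℂ) * Complex.I) - w)‖₊ : ENNReal) :=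
          mul_le_mul_left hpi _
      _ = (‖∫ w in OmegaRect R, g w / (((σ : ℂ) + (t : ℂ) * Complex.I) - w)‖₊ : ENNReal) :=
          one_mul _
      _ ≤ ∫⁻ w in OmegaRect R, (‖g w / (((σ : ℂ) + (t : ℂ) * Complex.I) - w)‖₊ : ENNReal) :=
          enorm_integral_le_lintegral_enorm _
      _ ≤ ∫⁻ w in OmegaRect R,
            ENNReal.ofReal ε * ((‖(σ:ℂ) + (t:ℂ) * Complex.I - w‖₊ : ENNReal))⁻¹ :=
          lintegral_mono (fun w => pb3 ε σ t g hbound w)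
      _ = ENNReal.ofReal ε *
            ∫⁻ w in OmegaRect R, ((‖(σ:ℂ) + (t:ℂ) * Complex.I - w‖₊ : ENNReal))⁻¹ :=
          lintegral_const_mul' _ _ ENNReal.ofReal_ne_top
  -- majorant
  set B : ℝ → ENNReal := fun t =>
    if |t| ≤ 2 * R then ENNReal.ofReal (300 * Real.log R) else ENNReal.ofReal (8 * R / |t|)
    with hB
  have hKb : ∀ t : ℝ,
      (‖(1 / (Real.pi : ℂ)) *
          ∫ w in OmegaRect R, g w / (((σ : ℂ) + (t : ℂ) * Complex.I) - w)‖₊ : ENNReal)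
        ≤ ENNReal.ofReal ε * B t := by
    intro t
    rcases le_or_gt |t| (2 * R) with h | h
    · rw [hB]
      simp only [if_pos h]
      exact le_trans (key t) (mul_le_mul_right (Kbound_near R σ t hR h) _)
    · rw [hB]
      simp only [if_neg (not_le.mpr h)]
      exact le_trans (key t) (mul_le_mul_right (Kbound_far R σ t hR h) _)
  -- integrate
  have hBint : ∫⁻ t : ℝ, (B t) ^ 2 ≤ ENNReal.ofReal (490000 * R * Real.log R ^ 2) := by
    have hAset : {t : ℝ | |t| ≤ 2 * R} = Set.Icc (-(2 * R)) (2 * R) := by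
      ext x
      simp [abs_le]
    have hA : MeasurableSet {t : ℝ | |t| ≤ 2 * R} := by
      rw [hAset]
      exact measurableSet_Icc
    rw [← lintegral_add_compl (fun t => (B t) ^ 2) hA]
    have h1 : ∫⁻ t in {t : ℝ | |t| ≤ 2 * R}, (B t) ^ 2
        ≤ ENNReal.ofReal (360000 * R * Real.log R ^ 2) := by
      have hb : ∀ t ∈ {t : ℝ | |t| ≤ 2 * R},
          (B t) ^ 2 ≤ ENNReal.ofReal ((300 * Real.log R) ^ 2) := by
        intro t ht
        have ht' : |t| ≤ 2 * R := ht
        rw [hB]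
        simp only [if_pos ht']
        rw [ENNReal.ofReal_pow (by positivity)]
      refine le_trans (setLIntegral_mono measurable_const hb) ?_
      rw [setLIntegral_const, hAset, Real.volume_Icc,
        ← ENNReal.ofReal_mul (by positivity)]
      apply ENNReal.ofReal_le_ofReal
      apply le_of_eq
      ring
    have h2 : ∫⁻ t in {t : ℝ | |t| ≤ 2 * R}ᶜ, (B t) ^ 2 ≤ ENNReal.ofReal (64 * R) := by
      have hcompl : {t : ℝ | |t| ≤ 2 * R}ᶜ = {t : ℝ | 2 * R < |t|} := by
        ext x
        simp [not_le]
      rw [hcompl]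
      have hb : ∀ t ∈ {t : ℝ | 2 * R < |t|},
          (B t) ^ 2 ≤ ENNReal.ofReal ((8 * R / |t|) ^ 2) := by
        intro t ht
        have ht' : 2 * R < |t| := ht
        rw [hB]
        simp only [if_neg (not_le.mpr ht')]
        rw [ENNReal.ofReal_pow (by positivity)]
      have hmeas : Measurable fun t : ℝ => ENNReal.ofReal ((8 * R / |t|) ^ 2) := by
        apply Measurable.ennreal_ofReal
        apply Measurable.pow_const
        exact measurable_const.div measurable_abs
      exact le_trans (setLIntegral_mono hmeas hb) (tail_int R hR)
    calc _ ≤ ENNReal.ofReal (360000 * R * Real.log R ^ 2) + ENNReal.ofReal (64 * R) :=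
          add_le_add h1 h2
      _ = ENNReal.ofReal (360000 * R * Real.log R ^ 2 + 64 * R) := by
          rw [← ENNReal.ofReal_add (by positivity) (by positivity)]
      _ ≤ ENNReal.ofReal (490000 * R * Real.log R ^ 2) := by
          apply ENNReal.ofReal_le_ofReal
          nlinarith [mul_le_mul_of_nonneg_left
            (show (1/4 : ℝ) ≤ Real.log R ^ 2 by nlinarith [hlog2]) hRpos.le]
  have hmain : ∫⁻ t : ℝ,
      (‖(1 / (Real.pi : ℂ)) *
          ∫ w in OmegaRect R, g w / (((σ : ℂ) + (t : ℂ) * Complex.I) - w)‖₊ : ENNReal) ^ 2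
        ≤ ENNReal.ofReal (Y ^ 2) := by
    have hstep1 : ∫⁻ t : ℝ,
        (‖(1 / (Real.pi : ℂ)) *
            ∫ w in OmegaRect R, g w / (((σ : ℂ) + (t : ℂ) * Complex.I) - w)‖₊ : ENNReal) ^ 2
          ≤ ∫⁻ t : ℝ, ENNReal.ofReal (ε ^ 2) * (B t) ^ 2 := by
      refine lintegral_mono fun t => ?_
      calc (‖(1 / (Real.pi : ℂ)) *
              ∫ w in OmegaRect R, g w / (((σ : ℂ) + (t : ℂ) * Complex.I) - w)‖₊ : ENNReal) ^ 2
          ≤ (ENNReal.ofReal ε * B t) ^ 2 := pow_le_pow_left₀ zero_le (hKb t) 2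
        _ = ENNReal.ofReal (ε ^ 2) * (B t) ^ 2 := by
            rw [mul_pow, ← ENNReal.ofReal_pow hε.le]
    refine le_trans hstep1 ?_
    rw [lintegral_const_mul' _ _ ENNReal.ofReal_ne_top]
    calc ENNReal.ofReal (ε ^ 2) * ∫⁻ t : ℝ, (B t) ^ 2
        ≤ ENNReal.ofReal (ε ^ 2) * ENNReal.ofReal (490000 * R * Real.log R ^ 2) :=
          mul_le_mul_right hBint _
      _ = ENNReal.ofReal (ε ^ 2 * (490000 * R * Real.log R ^ 2)) :=
          (ENNReal.ofReal_mul (by positivity)).symm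
      _ = ENNReal.ofReal (Y ^ 2) := by
          congr 1
          have hsS : Real.sqrt R ^ 2 = R := Real.sq_sqrt hRpos.le
          rw [hY]
          nlinarith [hsS]
  calc (∫⁻ t : ℝ,
        (‖(1 / (Real.pi : ℂ)) *
            ∫ w in OmegaRect R, g w / (((σ : ℂ) + (t : ℂ) * Complex.I) - w)‖₊ :
          ENNReal) ^ 2) ^ (1 / 2 : ℝ)
      ≤ (ENNReal.ofReal (Y ^ 2)) ^ (1 / 2 : ℝ) := ENNReal.rpow_le_rpow hmain (by norm_num)
    _ = ENNReal.ofReal Y := by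
        rw [ENNReal.ofReal_pow hYpos.le, ← ENNReal.rpow_natCast (ENNReal.ofReal Y) 2,
          ← ENNReal.rpow_mul]
        norm_num
end

section
/- Let k be a nonnegative integer and let a : ℕ → ℂ be finitely supported with a_0 = 0 (so that P(t) = ∑_{n≥1} a_n n^{−it} is a Dirichlet polynomial). Then limsup_{T→∞} (1/T) ∫_0^T | ∑_{n≥1} a_n n^{−it} |^{2^{k+1}} dt ≤ ( ∑_{n≥1} |a_n|² d(n)^k )^{2^k}. (Equivalently, the ℋ^{2^{k+1}}-norm of the Dirichlet polynomial is at most its 𝒟_k-norm: the space 𝒟_k is contractively embedded in ℋ^{2^{k+1}}.) -/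
open MeasureTheory Filter Finset

namespace DkAux


noncomputable def E (n : ℕ) (t : ℝ) : ℂ := (n : ℂ) ^ (-(t : ℂ) * Complex.I)

lemma E_eq_exp {n : ℕ} (hn : n ≠ 0) (t : ℝ) :
    E n t = Complex.exp ((Real.log n : ℂ) * (-(t : ℂ) * Complex.I)) := by
  rw [E, Complex.cpow_def_of_ne_zero (by exact_mod_cast hn)]
  congr 2
  rw [show ((n : ℂ)) = ((n : ℝ) : ℂ) by push_cast; ring,
    ← Complex.ofReal_log (by positivity)]

lemma E_mul {m n : ℕ} (hm : m ≠ 0) (hn : n ≠ 0) (t : ℝ) :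
    E (m * n) t = E m t * E n t := by
  rw [E_eq_exp (mul_ne_zero hm hn), E_eq_exp hm, E_eq_exp hn, ← Complex.exp_add, ← add_mul]
  congr 2
  push_cast
  rw [Real.log_mul (by exact_mod_cast hm) (by exact_mod_cast hn)]
  push_cast
  ring

/-- Dirichlet convolution. -/
def dconv {R : Type*} [CommSemiring R] (f g : ℕ → R) (n : ℕ) : R :=
  ∑ p ∈ n.divisorsAntidiagonal, f p.1 * g p.2

lemma dconv_eq_zero {R : Type*} [CommSemiring R] {f g : ℕ → R} {sf sg : Finset ℕ}
    (hf : ∀ n ∉ sf, f n = 0) (hg : ∀ n ∉ sg, g n = 0) {n : ℕ}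
    (hn : n ∉ (sf ×ˢ sg).image (fun p : ℕ × ℕ => p.1 * p.2)) : dconv f g n = 0 := by
  refine Finset.sum_eq_zero fun p hp => ?_
  by_cases h1 : p.1 ∈ sf
  · by_cases h2 : p.2 ∈ sg
    · exact absurd (Finset.mem_image.2 ⟨p, Finset.mem_product.2 ⟨h1, h2⟩,
        (Nat.mem_divisorsAntidiagonal.1 hp).1⟩) hn
    · rw [hg _ h2, mul_zero]
  · rw [hf _ h1, zero_mul]

lemma zero_not_mem_image {sf sg : Finset ℕ} (h0f : (0 : ℕ) ∉ sf) (h0g : (0 : ℕ) ∉ sg) :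
    (0 : ℕ) ∉ (sf ×ˢ sg).image (fun p : ℕ × ℕ => p.1 * p.2) := by
  intro h
  obtain ⟨p, hp, hp0⟩ := Finset.mem_image.1 h
  obtain ⟨h1, h2⟩ := Finset.mem_product.1 hp
  rcases Nat.mul_eq_zero.1 hp0 with h | h
  · exact h0f (h ▸ h1)
  · exact h0g (h ▸ h2)

/-- Reindexing a weighted sum of a Dirichlet convolution as a double sum. -/
lemma sum_dconv_mul {R : Type*} [CommSemiring R] (w : ℕ → R) {f g : ℕ → R} {sf sg : Finset ℕ}
    (hf : ∀ n ∉ sf, f n = 0) (hg : ∀ n ∉ sg, g n = 0)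
    (h0f : (0 : ℕ) ∉ sf) (h0g : (0 : ℕ) ∉ sg) :
    ∑ n ∈ (sf ×ˢ sg).image (fun p : ℕ × ℕ => p.1 * p.2), w n * dconv f g n
      = ∑ p ∈ sf ×ˢ sg, w (p.1 * p.2) * (f p.1 * g p.2) := by
  classical
  rw [← Finset.sum_fiberwise_of_maps_to (g := fun p : ℕ × ℕ => p.1 * p.2)
    (t := (sf ×ˢ sg).image (fun p : ℕ × ℕ => p.1 * p.2))
    (fun p hp => Finset.mem_image_of_mem _ hp)
    (fun p => w (p.1 * p.2) * (f p.1 * g p.2))]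
  refine Finset.sum_congr rfl fun n hn => ?_
  have hn0 : n ≠ 0 := fun h => zero_not_mem_image h0f h0g (h ▸ hn)
  have hsub : (sf ×ˢ sg).filter (fun p : ℕ × ℕ => p.1 * p.2 = n) ⊆ n.divisorsAntidiagonal := by
    intro p hp
    obtain ⟨-, h2⟩ := Finset.mem_filter.1 hp
    exact Nat.mem_divisorsAntidiagonal.2 ⟨h2, hn0⟩
  have : dconv f g n
      = ∑ p ∈ (sf ×ˢ sg).filter (fun p : ℕ × ℕ => p.1 * p.2 = n), f p.1 * g p.2 := by
    refine (Finset.sum_subset hsub fun p hp hp' => ?_).symm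
    by_cases h1 : p.1 ∈ sf
    · by_cases h2 : p.2 ∈ sg
      · exact absurd (Finset.mem_filter.2 ⟨Finset.mem_product.2 ⟨h1, h2⟩,
          (Nat.mem_divisorsAntidiagonal.1 hp).1⟩) hp'
      · rw [hg _ h2, mul_zero]
    · rw [hf _ h1, zero_mul]
  rw [this, Finset.mul_sum]
  refine Finset.sum_congr rfl fun p hp => ?_
  rw [(Finset.mem_filter.1 hp).2]

lemma card_divisorsAntidiagonal (n : ℕ) :
    n.divisorsAntidiagonal.card = n.divisors.card := by
  rw [← Nat.image_fst_divisorsAntidiagonal]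
  exact (Finset.card_image_of_injOn fun p hp q hq h => by
    have hp' := Nat.mem_divisorsAntidiagonal.1 hp
    have hq' := Nat.mem_divisorsAntidiagonal.1 hq
    have h1 : p.1 ≠ 0 := Nat.left_ne_zero_of_mem_divisorsAntidiagonal hp
    refine Prod.ext h ?_
    have := hp'.1.trans hq'.1.symm
    rw [h] at this
    exact Nat.eq_of_mul_eq_mul_left (Nat.pos_of_ne_zero (h ▸ h1)) this).symm

lemma card_divisors_mul_le (m n : ℕ) :
    ((m * n).divisors.card : ℝ) ≤ (m.divisors.card : ℝ) * (n.divisors.card : ℝ) := by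
  rcases eq_or_ne m 0 with rfl | hm
  · simp
  rcases eq_or_ne n 0 with rfl | hn
  · simp
  have hsub : (m * n).divisors ⊆ (m.divisors ×ˢ n.divisors).image
      (fun p : ℕ × ℕ => p.1 * p.2) := by
    intro k hk
    obtain ⟨hk1, -⟩ := Nat.mem_divisors.1 hk
    obtain ⟨y, z, hy, hz, hyz⟩ := Nat.dvd_mul.1 hk1
    exact Finset.mem_image.2 ⟨(y, z), Finset.mem_product.2
      ⟨Nat.mem_divisors.2 ⟨hy, hm⟩, Nat.mem_divisors.2 ⟨hz, hn⟩⟩, hyz⟩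
  calc ((m * n).divisors.card : ℝ)
      ≤ (((m.divisors ×ˢ n.divisors).image (fun p : ℕ × ℕ => p.1 * p.2)).card : ℝ) := by
        exact_mod_cast Finset.card_le_card hsub
    _ ≤ ((m.divisors ×ˢ n.divisors).card : ℝ) := by exact_mod_cast Finset.card_image_le
    _ = _ := by rw [Finset.card_product]; push_cast; ring

lemma ofReal_normSq (z : ℂ) : ((‖z‖ ^ 2 : ℝ) : ℂ) = z * (starRingEnd ℂ) z := by
  rw [Complex.mul_conj, Complex.normSq_eq_norm_sq]

lemma meanvalue (b : ℕ → ℂ) (s : Finset ℕ) (h0 : (0 : ℕ) ∉ s) :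
    Tendsto (fun T : ℝ => (1 / T) * ∫ t in (0:ℝ)..T, ‖∑ n ∈ s, b n * E n t‖ ^ 2) atTop
      (nhds (∑ n ∈ s, ‖b n‖ ^ 2)) := by
  classical
  set D := ∑ n ∈ s, ‖b n‖ ^ 2 with hD
  set cc : ℕ → ℕ → ℂ := fun m n => ((Real.log n - Real.log m : ℝ) : ℂ) * Complex.I with hcc
  have hpt : ∀ t : ℝ, ((‖∑ n ∈ s, b n * E n t‖ ^ 2 : ℝ) : ℂ)
      = ∑ m ∈ s, ∑ n ∈ s, (b m * (starRingEnd ℂ) (b n)) * Complex.exp (cc m n * t) := by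
    intro t
    have key : ∀ m ∈ s, ∀ n ∈ s, E m t * (starRingEnd ℂ) (E n t) = Complex.exp (cc m n * t) := by
      intro m hm n hn
      have hm0 : m ≠ 0 := fun h => h0 (h ▸ hm)
      have hn0 : n ≠ 0 := fun h => h0 (h ▸ hn)
      rw [E_eq_exp hm0, E_eq_exp hn0, ← Complex.exp_conj, ← Complex.exp_add]
      congr 1
      simp only [map_mul, map_neg, Complex.conj_ofReal, Complex.conj_I, hcc]
      push_cast
      ring
    rw [ofReal_normSq, map_sum, Finset.sum_mul_sum]
    refine Finset.sum_congr rfl fun m hm => Finset.sum_congr rfl fun n hn => ?_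
    rw [map_mul, ← key m hm n hn]
    ring
  set J : ℕ → ℕ → ℝ → ℂ := fun m n T =>
    if m = n then (T : ℂ) else (Complex.exp (cc m n * T) - 1) / cc m n with hJ
  have hccne : ∀ m ∈ s, ∀ n ∈ s, m ≠ n → cc m n ≠ 0 := by
    intro m hm n hn hmn h
    rcases mul_eq_zero.1 h with h' | h'
    · have : Real.log n - Real.log m = 0 := by exact_mod_cast h'
      have hm0 : (0:ℝ) < m := by
        have : m ≠ 0 := fun h => h0 (h ▸ hm); positivity
      have hn0 : (0:ℝ) < n := by
        have : n ≠ 0 := fun h => h0 (h ▸ hn); positivity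
      have : Real.log (n : ℝ) = Real.log (m : ℝ) := by linarith [sub_eq_zero.1 this]
      have : (n : ℝ) = (m : ℝ) := Real.log_injOn_pos (Set.mem_Ioi.2 hn0) (Set.mem_Ioi.2 hm0) this
      exact hmn (by exact_mod_cast this.symm)
    · exact Complex.I_ne_zero h'
  have hint : ∀ (T : ℝ), ∀ m ∈ s, ∀ n ∈ s,
      ∫ t in (0:ℝ)..T, Complex.exp (cc m n * t) = J m n T := by
    intro T m hm n hn
    by_cases h : m = n
    · subst h
      have hc : cc m m = 0 := by simp [hcc]
      simp [hJ, hc, Complex.exp_zero]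
    · rw [integral_exp_mul_complex (hccne m hm n hn h)]
      simp [hJ, h, Complex.exp_zero]
  have key : ∀ T : ℝ, ((∫ t in (0:ℝ)..T, ‖∑ n ∈ s, b n * E n t‖ ^ 2 : ℝ) : ℂ)
      = ∑ m ∈ s, ∑ n ∈ s, (b m * (starRingEnd ℂ) (b n)) * J m n T := by
    intro T
    have hcont : ∀ (z c : ℂ), Continuous (fun t : ℝ => z * Complex.exp (c * t)) :=
      fun z c => continuous_const.mul
        (Complex.continuous_exp.comp (continuous_const.mul Complex.continuous_ofReal))
    rw [← intervalIntegral.integral_ofReal,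
      intervalIntegral.integral_congr (g := fun t : ℝ =>
        ∑ m ∈ s, ∑ n ∈ s, (b m * (starRingEnd ℂ) (b n)) * Complex.exp (cc m n * t))
        (fun t _ => hpt t),
      intervalIntegral.integral_finset_sum (fun m _ =>
        (continuous_finset_sum s fun n _ => hcont _ _).intervalIntegrable _ _)]
    refine Finset.sum_congr rfl fun m hm => ?_
    rw [intervalIntegral.integral_finset_sum (fun n _ => (hcont _ _).intervalIntegrable _ _)]
    refine Finset.sum_congr rfl fun n hn => ?_
    rw [intervalIntegral.integral_const_mul, hint T m hm n hn]
  have split : ∀ T : ℝ, ∑ m ∈ s, ∑ n ∈ s, (b m * (starRingEnd ℂ) (b n)) * J m n T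
      = ((T * D : ℝ) : ℂ) + ∑ m ∈ s, ∑ n ∈ s.erase m, (b m * (starRingEnd ℂ) (b n)) * J m n T := by
    intro T
    have hm' : ∀ m ∈ s, ∑ n ∈ s, (b m * (starRingEnd ℂ) (b n)) * J m n T
        = ((‖b m‖ ^ 2 : ℝ) : ℂ) * (T : ℂ)
          + ∑ n ∈ s.erase m, (b m * (starRingEnd ℂ) (b n)) * J m n T := by
      intro m hm
      rw [← Finset.sum_erase_add s _ hm]
      have h1 : J m m T = (T : ℂ) := by simp [hJ]
      rw [h1, ofReal_normSq]
      ring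
    rw [Finset.sum_congr rfl hm', Finset.sum_add_distrib]
    congr 1
    rw [← Finset.sum_mul]
    push_cast [hD]
    ring
  set C : ℝ := ∑ m ∈ s, ∑ n ∈ s.erase m, ‖b m‖ * ‖b n‖ * (2 / ‖cc m n‖) with hC
  have hCb : ∀ T : ℝ, ‖∑ m ∈ s, ∑ n ∈ s.erase m, (b m * (starRingEnd ℂ) (b n)) * J m n T‖ ≤ C := by
    intro T
    refine (norm_sum_le _ _).trans (Finset.sum_le_sum fun m hm =>
      (norm_sum_le _ _).trans (Finset.sum_le_sum fun n hn => ?_))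
    have hne : m ≠ n := fun h => Finset.notMem_erase n s (h ▸ hn)
    have hn' : n ∈ s := Finset.mem_of_mem_erase hn
    have hc0 : cc m n ≠ 0 := hccne m hm n hn' hne
    have hre : (cc m n * (T : ℂ)).re = 0 := by
      have h3 : cc m n * (T : ℂ)
          = (((Real.log n - Real.log m) * T : ℝ) : ℂ) * Complex.I := by
        rw [hcc]; push_cast; ring
      rw [h3, Complex.mul_I_re]
      simp only [Complex.ofReal_im, neg_zero]
    have hexp : ‖Complex.exp (cc m n * T) - 1‖ ≤ 2 := by
      refine (norm_sub_le _ _).trans ?_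
      rw [Complex.norm_exp, hre, Real.exp_zero, norm_one]
      norm_num
    have h2 : J m n T = (Complex.exp (cc m n * T) - 1) / cc m n := by simp [hJ, hne]
    have hccpos : 0 < ‖cc m n‖ := norm_pos_iff.2 hc0
    rw [h2, norm_mul, norm_mul, norm_div, RCLike.norm_conj]
    gcongr
  rw [tendsto_iff_norm_sub_tendsto_zero]
  refine squeeze_zero' (Eventually.of_forall fun T => norm_nonneg _) ?_
    (Tendsto.div_atTop (tendsto_const_nhds (x := C)) tendsto_id)
  filter_upwards [eventually_ge_atTop 1] with T hT
  have hT0 : (0 : ℝ) < T := lt_of_lt_of_le one_pos hT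
  have habs : |(∫ t in (0:ℝ)..T, ‖∑ n ∈ s, b n * E n t‖ ^ 2) - T * D| ≤ C := by
    calc |(∫ t in (0:ℝ)..T, ‖∑ n ∈ s, b n * E n t‖ ^ 2) - T * D|
        = ‖((((∫ t in (0:ℝ)..T, ‖∑ n ∈ s, b n * E n t‖ ^ 2) - T * D : ℝ)) : ℂ)‖ := by
          rw [Complex.norm_real, Real.norm_eq_abs]
      _ = ‖∑ m ∈ s, ∑ n ∈ s.erase m, (b m * (starRingEnd ℂ) (b n)) * J m n T‖ := by
          rw [Complex.ofReal_sub, key T, split T]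
          congr 1
          ring
      _ ≤ C := hCb T
  calc ‖(1 / T) * (∫ t in (0:ℝ)..T, ‖∑ n ∈ s, b n * E n t‖ ^ 2) - D‖
      = (1 / T) * |(∫ t in (0:ℝ)..T, ‖∑ n ∈ s, b n * E n t‖ ^ 2) - T * D| := by
        rw [show (1 / T) * (∫ t in (0:ℝ)..T, ‖∑ n ∈ s, b n * E n t‖ ^ 2) - D
            = (1 / T) * ((∫ t in (0:ℝ)..T, ‖∑ n ∈ s, b n * E n t‖ ^ 2) - T * D) by
          field_simp]
        rw [Real.norm_eq_abs, abs_mul, abs_of_pos (by positivity)]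
    _ ≤ (1 / T) * C := by gcongr
    _ = C / T := by ring

/-- The Cauchy–Schwarz step. -/
lemma coeff_step (c : ℕ → ℂ) {sc : Finset ℕ} (hc : ∀ n ∉ sc, c n = 0)
    (h0 : (0 : ℕ) ∉ sc) (j : ℕ) :
    ∑ n ∈ (sc ×ˢ sc).image (fun p : ℕ × ℕ => p.1 * p.2),
        ‖dconv c c n‖ ^ 2 * (n.divisors.card : ℝ) ^ j
      ≤ (∑ n ∈ sc, ‖c n‖ ^ 2 * (n.divisors.card : ℝ) ^ (j + 1)) ^ 2 := by
  classical
  set g : ℕ → ℝ := fun n => ‖c n‖ ^ 2 with hg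
  have hg0 : ∀ n ∉ sc, g n = 0 := fun n hn => by simp [hg, hc n hn]
  have hCS : ∀ n : ℕ, ‖dconv c c n‖ ^ 2 ≤ (n.divisors.card : ℝ) * dconv g g n := by
    intro n
    have h1 : ‖dconv c c n‖ ≤ ∑ p ∈ n.divisorsAntidiagonal, ‖c p.1‖ * ‖c p.2‖ :=
      (norm_sum_le _ _).trans
        (le_of_eq (Finset.sum_congr rfl fun p _ => norm_mul _ _))
    calc ‖dconv c c n‖ ^ 2 ≤ (∑ p ∈ n.divisorsAntidiagonal, ‖c p.1‖ * ‖c p.2‖) ^ 2 :=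
          pow_le_pow_left₀ (norm_nonneg _) h1 2
      _ ≤ (n.divisorsAntidiagonal.card : ℝ) *
          ∑ p ∈ n.divisorsAntidiagonal, (‖c p.1‖ * ‖c p.2‖) ^ 2 := sq_sum_le_card_mul_sum_sq
      _ = (n.divisors.card : ℝ) * dconv g g n := by
          rw [card_divisorsAntidiagonal]
          congr 1
          exact Finset.sum_congr rfl fun p _ => by rw [hg]; dsimp [dconv]; ring
  have hstep1 : ∑ n ∈ (sc ×ˢ sc).image (fun p : ℕ × ℕ => p.1 * p.2),
      ‖dconv c c n‖ ^ 2 * (n.divisors.card : ℝ) ^ j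
      ≤ ∑ n ∈ (sc ×ˢ sc).image (fun p : ℕ × ℕ => p.1 * p.2),
        (n.divisors.card : ℝ) ^ (j + 1) * dconv g g n := by
    refine Finset.sum_le_sum fun n _ => ?_
    calc ‖dconv c c n‖ ^ 2 * (n.divisors.card : ℝ) ^ j
        ≤ ((n.divisors.card : ℝ) * dconv g g n) * (n.divisors.card : ℝ) ^ j :=
          mul_le_mul_of_nonneg_right (hCS n) (by positivity)
      _ = (n.divisors.card : ℝ) ^ (j + 1) * dconv g g n := by ring
  refine hstep1.trans ?_
  rw [sum_dconv_mul (fun n => (n.divisors.card : ℝ) ^ (j + 1)) hg0 hg0 h0 h0]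
  have hstep2 : ∑ p ∈ sc ×ˢ sc, ((p.1 * p.2).divisors.card : ℝ) ^ (j + 1) * (g p.1 * g p.2)
      ≤ ∑ p ∈ sc ×ˢ sc, ((p.1.divisors.card : ℝ) ^ (j + 1) * g p.1)
          * ((p.2.divisors.card : ℝ) ^ (j + 1) * g p.2) := by
    refine Finset.sum_le_sum fun p _ => ?_
    have h1 : ((p.1 * p.2).divisors.card : ℝ) ^ (j + 1)
        ≤ ((p.1.divisors.card : ℝ) * (p.2.divisors.card : ℝ)) ^ (j + 1) :=
      pow_le_pow_left₀ (by positivity) (card_divisors_mul_le p.1 p.2) _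
    calc ((p.1 * p.2).divisors.card : ℝ) ^ (j + 1) * (g p.1 * g p.2)
        ≤ ((p.1.divisors.card : ℝ) * (p.2.divisors.card : ℝ)) ^ (j + 1) * (g p.1 * g p.2) :=
          mul_le_mul_of_nonneg_right h1 (by positivity)
      _ = ((p.1.divisors.card : ℝ) ^ (j + 1) * g p.1)
          * ((p.2.divisors.card : ℝ) ^ (j + 1) * g p.2) := by rw [mul_pow]; ring
  refine hstep2.trans (le_of_eq ?_)
  rw [sq, Finset.sum_mul_sum, ← Finset.sum_product']
  refine Finset.sum_congr rfl fun p _ => by rw [hg]; ring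

/-- Product formula. -/
lemma sum_E_dconv {f g : ℕ → ℂ} {sf sg : Finset ℕ}
    (hf : ∀ n ∉ sf, f n = 0) (hg : ∀ n ∉ sg, g n = 0)
    (h0f : (0 : ℕ) ∉ sf) (h0g : (0 : ℕ) ∉ sg) (t : ℝ) :
    ∑ n ∈ (sf ×ˢ sg).image (fun p : ℕ × ℕ => p.1 * p.2), dconv f g n * E n t
      = (∑ n ∈ sf, f n * E n t) * (∑ n ∈ sg, g n * E n t) := by
  classical
  have h1 : ∑ n ∈ (sf ×ˢ sg).image (fun p : ℕ × ℕ => p.1 * p.2), dconv f g n * E n t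
      = ∑ n ∈ (sf ×ˢ sg).image (fun p : ℕ × ℕ => p.1 * p.2), E n t * dconv f g n :=
    Finset.sum_congr rfl fun n _ => mul_comm _ _
  rw [h1, sum_dconv_mul (fun n => E n t) hf hg h0f h0g, Finset.sum_mul_sum, ← Finset.sum_product']
  refine Finset.sum_congr rfl fun p hp => ?_
  obtain ⟨hp1, hp2⟩ := Finset.mem_product.1 hp
  rw [E_mul (fun h => h0f (h ▸ hp1)) (fun h => h0g (h ▸ hp2)) t]
  ring

/-- Iterated Dirichlet square. -/
noncomputable def iter (a : ℕ → ℂ) : ℕ → ℕ → ℂ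
  | 0 => a
  | k + 1 => iter (dconv a a) k

lemma iter_spec (k : ℕ) : ∀ (a : ℕ → ℂ) (sa : Finset ℕ),
    (∀ n ∉ sa, a n = 0) → (0 : ℕ) ∉ sa →
    ∃ s : Finset ℕ, (0 : ℕ) ∉ s ∧ (∀ n ∉ s, iter a k n = 0) ∧
      (∀ t : ℝ, ∑ n ∈ s, iter a k n * E n t = (∑ n ∈ sa, a n * E n t) ^ (2 ^ k)) ∧
      (∀ j : ℕ, ∑ n ∈ s, ‖iter a k n‖ ^ 2 * (n.divisors.card : ℝ) ^ j
        ≤ (∑ n ∈ sa, ‖a n‖ ^ 2 * (n.divisors.card : ℝ) ^ (j + k)) ^ (2 ^ k)) := by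
  induction k with
  | zero =>
    intro a sa ha h0
    exact ⟨sa, h0, ha, fun t => by simp [iter], fun j => by simp [iter]⟩
  | succ k IH =>
    intro a sa ha h0
    have ha' : ∀ n ∉ (sa ×ˢ sa).image (fun p : ℕ × ℕ => p.1 * p.2), dconv a a n = 0 :=
      fun n hn => dconv_eq_zero ha ha hn
    have h0' : (0 : ℕ) ∉ (sa ×ˢ sa).image (fun p : ℕ × ℕ => p.1 * p.2) :=
      zero_not_mem_image h0 h0
    obtain ⟨s, hs0, hssupp, hprod, hcoef⟩ := IH (dconv a a) _ ha' h0'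
    have hiter : iter a (k + 1) = iter (dconv a a) k := rfl
    refine ⟨s, hs0, fun n hn => by rw [hiter]; exact hssupp n hn, ?_, ?_⟩
    · intro t
      rw [hiter, hprod t, sum_E_dconv ha ha h0 h0 t,
        show (2 : ℕ) ^ (k + 1) = 2 * 2 ^ k by ring, pow_mul, sq]
    · intro j
      rw [hiter]
      refine (hcoef j).trans ?_
      have h1 := coeff_step a ha h0 (j + k)
      have h2 : (0 : ℝ) ≤ ∑ n ∈ (sa ×ˢ sa).image (fun p : ℕ × ℕ => p.1 * p.2),
          ‖dconv a a n‖ ^ 2 * (n.divisors.card : ℝ) ^ (j + k) :=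
        Finset.sum_nonneg fun n _ => by positivity
      calc (∑ n ∈ (sa ×ˢ sa).image (fun p : ℕ × ℕ => p.1 * p.2),
              ‖dconv a a n‖ ^ 2 * (n.divisors.card : ℝ) ^ (j + k)) ^ 2 ^ k
          ≤ ((∑ n ∈ sa, ‖a n‖ ^ 2 * (n.divisors.card : ℝ) ^ (j + k + 1)) ^ 2) ^ 2 ^ k :=
            pow_le_pow_left₀ h2 h1 _
        _ = (∑ n ∈ sa, ‖a n‖ ^ 2 * (n.divisors.card : ℝ) ^ (j + (k + 1))) ^ 2 ^ (k + 1) := by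
            rw [← pow_mul, show 2 * 2 ^ k = 2 ^ (k + 1) by ring,
              show j + k + 1 = j + (k + 1) by ring]
end DkAux

open DkAux in
/-- **Lemma 7.** For a nonnegative integer `k`, the space `𝒟_k` is contractively
embedded in `ℋ^{2^{k+1}}`: for every Dirichlet polynomial,
`limsup_{T→∞} (1/T) ∫₀^T |∑ aₙ n^{-it}|^{2^{k+1}} dt ≤ (∑ |aₙ|² d(n)^k)^{2^k}`. -/
theorem Dk_contractive_in_H2pow (k : ℕ) (a : ℕ → ℂ) (ha0 : a 0 = 0)
    (hfin : (Function.support a).Finite) :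
    Filter.limsup (fun T : ℝ =>
        (1 / T) * ∫ t in (0 : ℝ)..T,
          ‖∑' n : ℕ, a n * (n : ℂ) ^ (-(t : ℂ) * Complex.I)‖ ^ (2 ^ (k + 1)))
      Filter.atTop ≤
    (∑' n : ℕ, ‖a n‖ ^ 2 * (n.divisors.card : ℝ) ^ k) ^ (2 ^ k) := by
  classical
  set sa : Finset ℕ := hfin.toFinset with hsa
  have ha : ∀ n ∉ sa, a n = 0 := fun n hn => by
    by_contra h
    exact hn (hfin.mem_toFinset.2 h)
  have h0 : (0 : ℕ) ∉ sa := fun h => by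
    have := hfin.mem_toFinset.1 h
    exact this ha0
  obtain ⟨s, hs0, hssupp, hprod, hcoef⟩ := iter_spec k a sa ha h0
  have hfun : ∀ t : ℝ, ‖∑' n : ℕ, a n * (n : ℂ) ^ (-(t : ℂ) * Complex.I)‖ ^ (2 ^ (k + 1))
      = ‖∑ n ∈ s, iter a k n * E n t‖ ^ 2 := by
    intro t
    have h1 : ∑' n : ℕ, a n * (n : ℂ) ^ (-(t : ℂ) * Complex.I) = ∑ n ∈ sa, a n * E n t := by
      exact tsum_eq_sum fun n hn => by rw [ha n hn, zero_mul]
    rw [h1, hprod t, norm_pow, ← pow_mul, show 2 ^ k * 2 = 2 ^ (k + 1) by ring]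
  have heq : (fun T : ℝ => (1 / T) * ∫ t in (0 : ℝ)..T,
        ‖∑' n : ℕ, a n * (n : ℂ) ^ (-(t : ℂ) * Complex.I)‖ ^ (2 ^ (k + 1)))
      = fun T : ℝ => (1 / T) * ∫ t in (0 : ℝ)..T, ‖∑ n ∈ s, iter a k n * E n t‖ ^ 2 :=
    funext fun T => by rw [intervalIntegral.integral_congr fun t _ => hfun t]
  rw [heq, (meanvalue (iter a k) s hs0).limsup_eq]
  have h2 := hcoef 0
  simp only [zero_add, pow_zero, mul_one] at h2
  have h3 : ∑' n : ℕ, ‖a n‖ ^ 2 * (n.divisors.card : ℝ) ^ k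
      = ∑ n ∈ sa, ‖a n‖ ^ 2 * (n.divisors.card : ℝ) ^ k :=
    tsum_eq_sum fun n hn => by rw [ha n hn]; simp
  rw [h3]
  exact h2
end

section
/- Let a : ℕ → ℂ satisfy ∑_{n≥1} |a_n|² < ∞, and let f(s) = ∑_{n=1}^∞ a_n n^{−s} be the corresponding Dirichlet series, holomorphic on ℂ⁺_{1/2}. If f is not identically zero on ℂ⁺_{1/2} and f(s₀) = 0 for some s₀ ∈ ℂ⁺_{1/2}, then the zero set {s ∈ ℂ⁺_{1/2} : f(s) = 0} is infinite. (A function in ℋ² has either no zeros or infinitely many zeros in ℂ⁺_{1/2}.) -/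
open MeasureTheory Filter Metric LSeries Complex



lemma H2aux_kron (N : ℕ) {δ : ℝ} (hδ : 0 < δ) (T : ℝ) :
    ∃ τ : ℝ, T ≤ τ ∧ ∀ n : ℕ, n < N →
      ‖Complex.exp ((-(τ * Real.log n) : ℝ) * Complex.I) - 1‖ ≤ δ := by
  obtain ⟨M, hM1, hMT⟩ : ∃ M : ℕ, 1 ≤ M ∧ T ≤ (M : ℝ) := by
    refine ⟨max 1 ⌈T⌉₊, le_max_left _ _, (Nat.le_ceil T).trans ?_⟩
    exact_mod_cast Nat.cast_le.mpr (le_max_right 1 ⌈T⌉₊)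
  set w : ℕ → (Fin N → ℂ) := fun k n =>
    Complex.exp ((-((k * M : ℕ) * Real.log n) : ℝ) * Complex.I) with hw
  have hwnorm : ∀ k (n : Fin N), ‖w k n‖ = 1 := fun k n =>
    Complex.norm_exp_ofReal_mul_I _
  have hmem : ∀ k, w k ∈ closedBall (0 : Fin N → ℂ) 1 := by
    intro k
    rw [mem_closedBall_zero_iff]
    exact pi_norm_le_iff_of_nonneg zero_le_one |>.mpr fun n => (hwnorm k n).le
  obtain ⟨x, -, φ, hφ, hconv⟩ :=
    (isCompact_closedBall (0 : Fin N → ℂ) 1).tendsto_subseq hmem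
  obtain ⟨K, hK⟩ := (Metric.tendsto_atTop.mp hconv) (δ / 2) (half_pos hδ)
  set j := φ K with hj
  set l := φ (K + 1) with hl
  have hjl : j < l := hφ (Nat.lt_succ_self K)
  have hdist : dist (w l) (w j) ≤ δ := by
    calc dist (w l) (w j) ≤ dist (w l) x + dist (w j) x := dist_triangle_right _ _ _
    _ ≤ δ / 2 + δ / 2 := add_le_add (hK (K+1) (Nat.le_succ K)).le (hK K le_rfl).le
    _ = δ := add_halves δ
  refine ⟨(((l - j) * M : ℕ) : ℝ), ?_, ?_⟩
  · refine hMT.trans ?_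
    have : (1 : ℕ) ≤ l - j := Nat.one_le_iff_ne_zero.mpr (Nat.sub_ne_zero_of_lt hjl)
    exact_mod_cast Nat.le_mul_of_pos_left M (by omega)
  · intro n hn
    have key : w l ⟨n, hn⟩ - w j ⟨n, hn⟩ =
        (Complex.exp ((-(((l - j) * M : ℕ) * Real.log n) : ℝ) * Complex.I) - 1)
          * w j ⟨n, hn⟩ := by
      rw [sub_one_mul, hw]
      simp only
      rw [← Complex.exp_add]
      congr 2
      have hcast : ((l * M : ℕ) : ℝ) = ((l - j) * M : ℕ) + ((j * M : ℕ) : ℝ) := by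
        push_cast [Nat.cast_sub hjl.le]
        ring
      push_cast [hcast] at *
      ring
    have := norm_le_pi_norm (w l - w j) ⟨n, hn⟩
    rw [Pi.sub_apply, key] at this
    calc ‖Complex.exp ((-(((l - j) * M : ℕ) * Real.log n) : ℝ) * Complex.I) - 1‖
        = ‖(Complex.exp ((-(((l - j) * M : ℕ) * Real.log n) : ℝ) * Complex.I) - 1) * w j ⟨n, hn⟩‖ := by
          rw [norm_mul, hwnorm, mul_one]
      _ ≤ ‖w l - w j‖ := this
      _ ≤ δ := by rwa [dist_eq_norm] at hdist



noncomputable def H2bb (a : ℕ → ℂ) (σ : ℝ) (n : ℕ) : ℝ :=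
  (‖a n‖ ^ 2 + (((n : ℝ) ^ σ)⁻¹) ^ 2) / 2

lemma H2bb_nonneg (a : ℕ → ℂ) (σ : ℝ) (n : ℕ) : 0 ≤ H2bb a σ n := by
  unfold H2bb; positivity

lemma H2bb_summable {a : ℕ → ℂ} {σ : ℝ} (hσ : 1 / 2 < σ)
    (ha : Summable fun n => ‖a n‖ ^ 2) : Summable (H2bb a σ) := by
  have h2 : Summable (fun n : ℕ => (((n : ℝ) ^ σ)⁻¹) ^ 2) := by
    have he : ∀ n : ℕ, (((n : ℝ) ^ σ)⁻¹) ^ 2 = ((n : ℝ) ^ (σ * 2))⁻¹ := by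
      intro n
      rw [inv_pow, ← Real.rpow_natCast ((n : ℝ) ^ σ) 2, ← Real.rpow_mul n.cast_nonneg]
      norm_num
    simp only [he]
    exact Real.summable_nat_rpow_inv.mpr (by linarith)
  exact (ha.add h2).div_const 2

lemma H2term_le_bb {a : ℕ → ℂ} {σ : ℝ} (hσ : 1 / 2 < σ) {s : ℂ} (hs : σ ≤ s.re) (n : ℕ) :
    ‖term a s n‖ ≤ H2bb a σ n := by
  have h1 : ‖term a s n‖ ≤ ‖a n‖ * ((n : ℝ) ^ σ)⁻¹ := by
    rw [norm_term_eq]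
    split_ifs with h
    · positivity
    · rw [div_eq_mul_inv]
      have hn1 : (1 : ℝ) ≤ (n : ℝ) := by exact_mod_cast Nat.one_le_iff_ne_zero.mpr h
      have hpos : (0 : ℝ) < (n : ℝ) ^ σ := Real.rpow_pos_of_pos (by linarith) σ
      have : (n : ℝ) ^ σ ≤ (n : ℝ) ^ s.re := Real.rpow_le_rpow_of_exponent_le hn1 hs
      gcongr
  refine h1.trans ?_
  have h2 := two_mul_le_add_sq ‖a n‖ (((n : ℝ) ^ σ)⁻¹)
  unfold H2bb
  linarith



lemma H2translate {a : ℕ → ℂ} (ha : Summable fun n => ‖a n‖ ^ 2) {σ₀ : ℝ}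
    (hσ₀ : 1 / 2 < σ₀) {ε : ℝ} (hε : 0 < ε) (T : ℝ) :
    ∃ τ : ℝ, T ≤ τ ∧ ∀ s : ℂ, σ₀ ≤ s.re →
      ‖LSeries a (s + τ * Complex.I) - LSeries a s‖ ≤ ε := by
  set b : ℕ → ℝ := H2bb a σ₀ with hbdef
  have hb : Summable b := H2bb_summable hσ₀ ha
  have hbnn : ∀ n, 0 ≤ b n := H2bb_nonneg a σ₀
  set Cb : ℝ := ∑' n, b n with hCbdef
  have hCb : 0 ≤ Cb := tsum_nonneg hbnn
  obtain ⟨N, hN⟩ : ∃ N, ∑' k, b (k + N) < ε / 6 :=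
    ((tendsto_sum_nat_add b).eventually_lt_const (by positivity)).exists
  set δ : ℝ := ε / 3 / (Cb + 1) with hδdef
  have hδ : 0 < δ := by positivity
  obtain ⟨τ, hτT, hτδ⟩ := H2aux_kron N hδ T
  refine ⟨τ, hτT, fun s hs => ?_⟩
  set c : ℕ → ℂ := fun n => Complex.exp ((-(τ * Real.log n) : ℝ) * Complex.I) with hc
  have hcnorm : ∀ n, ‖c n‖ = 1 := fun n => Complex.norm_exp_ofReal_mul_I _
  have hterm : ∀ n, term a (s + (τ : ℂ) * Complex.I) n = term a s n * c n := by
    intro n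
    rcases eq_or_ne n 0 with rfl | hn
    · simp [term_zero]
    · rw [term_of_ne_zero hn, term_of_ne_zero hn, hc]
      have hn0 : (n : ℂ) ≠ 0 := Nat.cast_ne_zero.mpr hn
      rw [Complex.cpow_add _ _ hn0, ← div_div, div_eq_mul_inv (a n / _)]
      congr 1
      rw [Complex.cpow_def_of_ne_zero hn0, ← Complex.exp_neg]
      congr 1
      have hlog : Complex.log (n : ℂ) = ((Real.log n : ℝ) : ℂ) := by
        rw [show ((n : ℕ) : ℂ) = ((n : ℝ) : ℂ) by push_cast; ring,
          Complex.ofReal_log n.cast_nonneg]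
      rw [hlog]
      push_cast
      ring
  have hbound : ∀ n, ‖term a s n‖ ≤ b n := fun n => H2term_le_bb hσ₀ hs n
  have hsum1 : Summable (term a s) := Summable.of_norm_bounded hb hbound
  have hsum1' : Summable (fun n => term a s n * c n) :=
    Summable.of_norm_bounded hb fun n => by
      rw [norm_mul, hcnorm, mul_one]; exact hbound n
  have hcsub : ∀ n, ‖c n - 1‖ ≤ 2 := fun n =>
    (norm_sub_le _ _).trans (by rw [hcnorm, norm_one]; norm_num)
  have hu : Summable (fun n => term a s n * (c n - 1)) := by
    refine Summable.of_norm_bounded (hb.mul_left 2) fun n => ?_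
    rw [norm_mul]
    calc ‖term a s n‖ * ‖c n - 1‖ ≤ b n * 2 :=
          mul_le_mul (hbound n) (hcsub n) (norm_nonneg _) (hbnn n)
      _ = 2 * b n := mul_comm _ _
  have hdiffF : LSeries a (s + (τ : ℂ) * Complex.I) - LSeries a s
      = ∑' n, term a s n * (c n - 1) := by
    rw [LSeries, LSeries, tsum_congr hterm, ← Summable.tsum_sub hsum1' hsum1]
    exact tsum_congr fun n => by ring
  rw [hdiffF, ← Summable.sum_add_tsum_nat_add N hu]
  have hhead : ‖∑ i ∈ Finset.range N, term a s i * (c i - 1)‖ ≤ ε / 3 := by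
    calc ‖∑ i ∈ Finset.range N, term a s i * (c i - 1)‖
        ≤ ∑ i ∈ Finset.range N, ‖term a s i * (c i - 1)‖ := norm_sum_le _ _
      _ ≤ ∑ i ∈ Finset.range N, b i * δ := by
          refine Finset.sum_le_sum fun i hi => ?_
          rw [norm_mul]
          exact mul_le_mul (hbound i) (hτδ i (Finset.mem_range.mp hi)) (norm_nonneg _) (hbnn i)
      _ = (∑ i ∈ Finset.range N, b i) * δ := (Finset.sum_mul _ _ _).symm
      _ ≤ Cb * δ := by
          refine mul_le_mul_of_nonneg_right ?_ hδ.le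
          exact Summable.sum_le_tsum _ (fun i _ => hbnn i) hb
      _ ≤ ε / 3 := by
          rw [hδdef]
          rw [show Cb * (ε / 3 / (Cb + 1)) = Cb / (Cb + 1) * (ε / 3) by ring]
          have h2 : Cb / (Cb + 1) ≤ 1 := (div_le_one (by linarith)).mpr (by linarith)
          calc Cb / (Cb + 1) * (ε / 3) ≤ 1 * (ε / 3) :=
                mul_le_mul_of_nonneg_right h2 (by positivity)
            _ = ε / 3 := one_mul _
  have hbtail : Summable (fun k => 2 * b (k + N)) :=
    ((summable_nat_add_iff N).mpr hb).mul_left 2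
  have hutail : Summable (fun k => ‖term a s (k + N) * (c (k + N) - 1)‖) :=
    ((summable_nat_add_iff N).mpr hu).norm
  have htail : ‖∑' k, term a s (k + N) * (c (k + N) - 1)‖ ≤ ε / 3 := by
    calc ‖∑' k, term a s (k + N) * (c (k + N) - 1)‖
        ≤ ∑' k, ‖term a s (k + N) * (c (k + N) - 1)‖ := norm_tsum_le_tsum_norm hutail
      _ ≤ ∑' k, 2 * b (k + N) := by
          refine Summable.tsum_le_tsum (fun k => ?_) hutail hbtail
          rw [norm_mul]
          calc ‖term a s (k + N)‖ * ‖c (k + N) - 1‖ ≤ b (k + N) * 2 :=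
                mul_le_mul (hbound _) (hcsub _) (norm_nonneg _) (hbnn _)
            _ = 2 * b (k + N) := mul_comm _ _
      _ = 2 * ∑' k, b (k + N) := tsum_mul_left
      _ ≤ ε / 3 := by linarith
  calc ‖∑ i ∈ Finset.range N, term a s i * (c i - 1)
        + ∑' k, term a s (k + N) * (c (k + N) - 1)‖
      ≤ ‖∑ i ∈ Finset.range N, term a s i * (c i - 1)‖
        + ‖∑' k, term a s (k + N) * (c (k + N) - 1)‖ := norm_add_le _ _
    _ ≤ ε / 3 + ε / 3 := add_le_add hhead htail
    _ ≤ ε := by linarith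



/-- A nontrivial function in `ℋ²` has either no zeros or infinitely many zeros in the
half-plane `Re s > 1/2`. -/
theorem H2_zero_set_infinite (a : ℕ → ℂ) (ha0 : a 0 = 0)
    (ha : Summable fun n => ‖a n‖ ^ 2)
    (hnontriv : ∃ z : ℂ, 1 / 2 < z.re ∧ (∑' n : ℕ, a n * (n : ℂ) ^ (-z)) ≠ 0)
    (s₀ : ℂ) (hs₀ : 1 / 2 < s₀.re)
    (hzero : (∑' n : ℕ, a n * (n : ℂ) ^ (-s₀)) = 0) :
    {z : ℂ | 1 / 2 < z.re ∧ (∑' n : ℕ, a n * (n : ℂ) ^ (-z)) = 0}.Infinite := by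
  have hFL : ∀ z : ℂ, (∑' n : ℕ, a n * (n : ℂ) ^ (-z)) = LSeries a z := by
    intro z
    refine tsum_congr fun n => ?_
    rcases eq_or_ne n 0 with rfl | hn
    · simp [ha0]
    · rw [LSeries.term_of_ne_zero hn, Complex.cpow_neg, div_eq_mul_inv]
  simp only [hFL] at hnontriv hzero ⊢
  set U : Set ℂ := {z : ℂ | 1 / 2 < z.re} with hUdef
  have hUopen : IsOpen U := isOpen_lt continuous_const Complex.continuous_re
  have habs : abscissaOfAbsConv a ≤ ((1 / 2 : ℝ) : EReal) := by
    refine LSeries.abscissaOfAbsConv_le_of_forall_lt_LSeriesSummable fun y hy => ?_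
    refine Summable.of_norm_bounded (H2bb_summable hy ha) fun n => ?_
    exact H2term_le_bb hy (by simp) n
  have hdiffAt : ∀ z : ℂ, 1 / 2 < z.re → DifferentiableAt ℂ (LSeries a) z := by
    intro z hz
    have hmem : z ∈ {s : ℂ | abscissaOfAbsConv a < s.re} := by
      refine lt_of_le_of_lt habs ?_
      exact_mod_cast hz
    exact (LSeries_differentiableOn a).differentiableAt
      ((isOpen_re_gt_EReal _).mem_nhds hmem)
  have hDOn : DifferentiableOn ℂ (LSeries a) U := fun z hz =>
    (hdiffAt z hz).differentiableWithinAt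
  have hana : AnalyticOnNhd ℂ (LSeries a) U := hDOn.analyticOnNhd hUopen
  obtain ⟨z₁, hz₁re, hz₁⟩ := hnontriv
  have hne : ¬ (LSeries a =ᶠ[nhds s₀] 0) := by
    intro h
    exact hz₁ (hana.eqOn_zero_of_preconnected_of_eventuallyEq_zero
      ((convex_halfSpace_re_gt (1 / 2)).isPreconnected) hs₀ h hz₁re)
  rcases (hana s₀ hs₀).eventually_eq_zero_or_eventually_ne_zero with h0 | hnz
  · exact absurd h0 hne
  rw [eventually_nhdsWithin_iff] at hnz
  obtain ⟨ε₁, hε₁, hball1⟩ := Metric.eventually_nhds_iff.mp hnz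
  obtain ⟨ε₂, hε₂, hball2⟩ := Metric.mem_nhds_iff.mp (hUopen.mem_nhds hs₀)
  set r : ℝ := min ε₁ ε₂ / 2 with hrdef
  have hr : 0 < r := by positivity
  have hrε₁ : r < ε₁ := by
    have h1 : min ε₁ ε₂ ≤ ε₁ := min_le_left _ _
    have h2 : 0 < min ε₁ ε₂ := lt_min hε₁ hε₂
    rw [hrdef]; linarith
  have hrε₂ : r < ε₂ := by
    have h1 : min ε₁ ε₂ ≤ ε₂ := min_le_right _ _
    have h2 : 0 < min ε₁ ε₂ := lt_min hε₁ hε₂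
    rw [hrdef]; linarith
  have hballU : closedBall s₀ r ⊆ U := fun z hz =>
    hball2 (mem_ball.mpr (lt_of_le_of_lt (mem_closedBall.mp hz) hrε₂))
  have hsphere : ∀ z ∈ sphere s₀ r, LSeries a z ≠ 0 := by
    intro z hz
    have hd : dist z s₀ = r := mem_sphere.mp hz
    refine hball1 (by rw [hd]; exact hrε₁) ?_
    simp only [Set.mem_compl_iff, Set.mem_singleton_iff]
    intro h
    rw [h, dist_self] at hd
    exact hr.ne hd
  have hre : ∀ s ∈ closedBall s₀ r, s₀.re - r ≤ s.re := by
    intro s hs'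
    have h1 : |(s - s₀).re| ≤ dist s s₀ := by
      rw [Complex.dist_eq]; exact Complex.abs_re_le_norm _
    have h2 := abs_le.mp (h1.trans (mem_closedBall.mp hs'))
    have := h2.1
    simp only [Complex.sub_re] at this
    linarith
  have hσ₀ : 1 / 2 < s₀.re - r := by
    have hmem : (s₀ - (r : ℂ)) ∈ closedBall s₀ r := by
      rw [mem_closedBall, Complex.dist_eq]
      have : s₀ - (r : ℂ) - s₀ = -(r : ℂ) := by ring
      rw [this, norm_neg, Complex.norm_of_nonneg hr.le]
    have := hballU hmem
    simpa [hUdef, Complex.sub_re, Complex.ofReal_re] using this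
  have hsne : (sphere s₀ r).Nonempty := NormedSpace.sphere_nonempty.mpr hr.le
  have hcont : ContinuousOn (fun z => ‖LSeries a z‖) (sphere s₀ r) := fun z hz =>
    ((hdiffAt z (hballU (sphere_subset_closedBall hz))).continuousAt.norm).continuousWithinAt
  obtain ⟨zm, hzm, hmin'⟩ := (isCompact_sphere s₀ r).exists_isMinOn hsne hcont
  have hmin := isMinOn_iff.mp hmin'
  set m : ℝ := ‖LSeries a zm‖ with hmdef
  have hm : 0 < m := norm_pos_iff.mpr (hsphere zm hzm)
  by_contra hfin
  rw [Set.not_infinite] at hfin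
  obtain ⟨B, hB⟩ : ∃ B : ℝ, ∀ z ∈ {z : ℂ | 1 / 2 < z.re ∧ LSeries a z = 0}, z.im ≤ B := by
    obtain ⟨B, hB⟩ := (hfin.image Complex.im).bddAbove
    exact ⟨B, fun z hz => hB (Set.mem_image_of_mem _ hz)⟩
  obtain ⟨τ, hτT, hτ⟩ := H2translate ha hσ₀ (show 0 < m / 3 by positivity)
    (B - s₀.im + r + 1)
  set g : ℂ → ℂ := fun z => LSeries a (z + τ * Complex.I) with hgdef
  have hrecomp : ∀ z : ℂ, (z + τ * Complex.I).re = z.re := by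
    intro z
    simp [Complex.add_re, Complex.mul_re, Complex.I_re, Complex.I_im]
  have hgdiffAt : ∀ z ∈ closedBall s₀ r, DifferentiableAt ℂ g z := by
    intro z hz
    have h1 : 1 / 2 < (z + τ * Complex.I).re := by
      rw [hrecomp]; exact hballU hz
    exact (hdiffAt _ h1).comp z (differentiableAt_id.add_const _)
  by_cases hzero' : ∃ z ∈ closedBall s₀ r, g z = 0
  · obtain ⟨z, hz, hgz⟩ := hzero'
    have hmem : (z + τ * Complex.I) ∈ {z : ℂ | 1 / 2 < z.re ∧ LSeries a z = 0} := by
      refine ⟨?_, hgz⟩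
      rw [hrecomp]; exact hballU hz
    have him : B < (z + τ * Complex.I).im := by
      have h1 : s₀.im - r ≤ z.im := by
        have ha1 : |(z - s₀).im| ≤ dist z s₀ := by
          rw [Complex.dist_eq]; exact Complex.abs_im_le_norm _
        have h2 := (abs_le.mp (ha1.trans (mem_closedBall.mp hz))).1
        simp only [Complex.sub_im] at h2
        linarith
      have h2 : (z + τ * Complex.I).im = z.im + τ := by
        simp [Complex.add_im, Complex.mul_im, Complex.I_re, Complex.I_im]
      rw [h2]; linarith
    exact absurd (hB _ hmem) (not_le.mpr him)
  · push_neg at hzero'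
    have hcontg : ContinuousOn g (closedBall s₀ r) := fun z hz =>
      (hgdiffAt z hz).continuousAt.continuousWithinAt
    have hdc : DiffContOnCl ℂ (fun z => (g z)⁻¹) (ball s₀ r) := by
      constructor
      · exact fun z hz =>
          ((hgdiffAt z (ball_subset_closedBall hz)).differentiableWithinAt).inv
            (hzero' z (ball_subset_closedBall hz))
      · rw [closure_ball s₀ hr.ne']
        exact hcontg.inv₀ hzero'
    have hfront : ∀ z ∈ frontier (ball s₀ r), ‖(g z)⁻¹‖ ≤ (2 / 3 * m)⁻¹ := by
      intro z hz
      rw [frontier_ball s₀ hr.ne'] at hz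
      have h1 : m ≤ ‖LSeries a z‖ := hmin z hz
      have h2 : ‖g z - LSeries a z‖ ≤ m / 3 := hτ z (hre z (sphere_subset_closedBall hz))
      have h3 : 2 / 3 * m ≤ ‖g z‖ := by
        have h4 : ‖LSeries a z‖ - ‖g z‖ ≤ ‖LSeries a z - g z‖ := norm_sub_norm_le _ _
        rw [norm_sub_rev] at h4
        linarith
      rw [norm_inv]
      exact inv_anti₀ (by positivity) h3
    have hclose : s₀ ∈ closure (ball s₀ r) := by
      rw [closure_ball s₀ hr.ne']; exact mem_closedBall_self hr.le
    have hmax := Complex.norm_le_of_forall_mem_frontier_norm_le isBounded_ball hdc hfront hclose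
    have hgs₀ : ‖g s₀‖ ≤ m / 3 := by
      have h1 := hτ s₀ (by linarith)
      rw [hzero, sub_zero] at h1
      exact h1
    have hgs₀ne := hzero' s₀ (mem_closedBall_self hr.le)
    rw [norm_inv] at hmax
    have h5 : 2 / 3 * m ≤ ‖g s₀‖ := by
      have hpos : 0 < ‖g s₀‖ := norm_pos_iff.mpr hgs₀ne
      exact (inv_le_inv₀ hpos (by positivity)).mp hmax
    linarith
end
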